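/- arXiv:1003.0752 — 4 statements merged into one kernel-verified Lean document; each statement's English description precedes it below -/
import Mathlib

section
/- For any real y ≥ 2, the sum over primes p ≤ y of (log p)/p equals log y + O(1), i.e. there exists an absolute constant C such that |∑_{p ≤ y, p prime} (log p)/p − log y| ≤ C for all y ≥ 2. -/
open Finset Nat

lemma pow_le_factorial_mul_exp : ∀ N : ℕ, (N:ℝ)^N ≤ (N ! : ℝ) * Real.exp N := by
  intro N
  induction N with
  | zero => simp
  | succ n ih =>
    rcases Nat.eq_zero_or_pos n with rfl | hn
    · simpa using Real.one_le_exp (le_refl 1) |>.trans (le_of_eq rfl)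
    have hn' : (0:ℝ) < n := by exact_mod_cast hn
    have h1 : ((n:ℝ)+1)^n ≤ (n:ℝ)^n * Real.exp 1 := by
      have he : ((n:ℝ)+1) = n * (1 + 1/n) := by field_simp
      rw [he, mul_pow]
      gcongr _ * ?_
      have h2 : (1 + 1/(n:ℝ)) ≤ Real.exp (1/n) := by
        simpa [add_comm] using Real.add_one_le_exp (1/(n:ℝ))
      calc (1 + 1/(n:ℝ))^n ≤ (Real.exp (1/n))^n := by
            apply pow_le_pow_left₀ (by positivity) h2
        _ = Real.exp 1 := by
            rw [← Real.exp_nat_mul]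
            congr 1
            field_simp
    push_cast
    calc ((n:ℝ)+1)^(n+1) = ((n:ℝ)+1) * ((n:ℝ)+1)^n := by ring
      _ ≤ ((n:ℝ)+1) * ((n:ℝ)^n * Real.exp 1) := by
          have : (0:ℝ) ≤ (n:ℝ)+1 := by positivity
          exact mul_le_mul_of_nonneg_left h1 this
      _ ≤ ((n:ℝ)+1) * (((n ! : ℝ) * Real.exp n) * Real.exp 1) := by
          gcongr
      _ = ((n+1)! : ℝ) * Real.exp ((n:ℝ)+1) := by
          rw [Real.exp_add, Nat.factorial_succ]; push_cast; ring

lemma log_factorial_lower (N : ℕ) : (N:ℝ) * Real.log N - N ≤ Real.log (N !) := by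
  rcases Nat.eq_zero_or_pos N with rfl | hN
  · simp
  have h := pow_le_factorial_mul_exp N
  have h2 : Real.log ((N:ℝ)^N) ≤ Real.log ((N ! : ℝ) * Real.exp N) := by
    apply Real.log_le_log (by positivity) h
  rw [Real.log_pow, Real.log_mul (by positivity) (Real.exp_ne_zero _), Real.log_exp] at h2
  linarith [h2]

lemma log_factorial_upper (N : ℕ) : Real.log (N !) ≤ (N:ℝ) * Real.log N := by
  rcases Nat.eq_zero_or_pos N with rfl | hN
  · simp
  have h : (N ! : ℝ) ≤ (N:ℝ)^N := by exact_mod_cast Nat.factorial_le_pow N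
  calc Real.log (N !) ≤ Real.log ((N:ℝ)^N) := Real.log_le_log (by positivity) h
    _ = N * Real.log N := Real.log_pow N N

lemma log_factorial_eq_sum (N : ℕ) (hN : 1 ≤ N) :
    Real.log (N !) = ∑ p ∈ (Iic N).filter Nat.Prime,
      ((N !).factorization p : ℝ) * Real.log p := by
  have hfac : N ! ≠ 0 := Nat.factorial_ne_zero N
  have hsupp : (N !).factorization.support = (Iic N).filter Nat.Prime := by
    ext p
    simp only [Nat.support_factorization, Nat.mem_primeFactors, mem_filter, mem_Iic]
    constructor
    · rintro ⟨hp, hdvd, -⟩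
      exact ⟨(Nat.Prime.dvd_factorial hp).1 hdvd, hp⟩
    · rintro ⟨hle, hp⟩
      exact ⟨hp, (Nat.Prime.dvd_factorial hp).2 hle, hfac⟩
  conv_lhs => rw [← Nat.factorization_prod_pow_eq_self hfac]
  rw [Finsupp.prod, ← hsupp]
  push_cast
  rw [Real.log_prod (fun p hp => by
    have hpp : p.Prime := Nat.prime_of_mem_primeFactors (by rwa [← Nat.support_factorization])
    have : (0:ℝ) < p := by exact_mod_cast hpp.pos
    positivity)]
  apply Finset.sum_congr rfl
  intro p hp
  rw [Real.log_pow]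

lemma factorization_factorial_eq {p N : ℕ} (hp : p.Prime) (hN : 1 ≤ N) :
    (N !).factorization p = ∑ i ∈ Finset.Ico 1 (N+1), N / p ^ i := by
  haveI : Fact p.Prime := ⟨hp⟩
  rw [Nat.factorization_def _ hp]
  exact padicValNat_factorial (Nat.lt_succ_of_lt (Nat.log_lt_self p (by omega)))

lemma fact_fact_lb {p N : ℕ} (hp : p.Prime) (hN : 1 ≤ N) :
    (N:ℝ)/p - 1 ≤ ((N !).factorization p : ℝ) := by
  have h1 : N / p ≤ (N !).factorization p := by
    rw [factorization_factorial_eq hp hN]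
    have : N / p = N / p ^ 1 := by rw [pow_one]
    rw [this]
    apply Finset.single_le_sum (f := fun i => N / p ^ i) (fun i _ => Nat.zero_le _)
    simp [Finset.mem_Ico]; omega
  have h2 : (N:ℝ)/p - 1 < (N / p : ℕ) := by
    have hp0 : (0:ℝ) < p := by exact_mod_cast hp.pos
    rw [sub_lt_iff_lt_add, div_lt_iff₀ hp0]
    have h := Nat.lt_mul_div_succ N hp.pos
    have : N < (N/p + 1) * p := by rw [mul_comm]; exact h
    exact_mod_cast this
  calc (N:ℝ)/p - 1 ≤ ((N / p : ℕ) : ℝ) := h2.le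
    _ ≤ ((N !).factorization p : ℝ) := by exact_mod_cast h1

lemma fact_fact_ub {p N : ℕ} (hp : p.Prime) (hN : 1 ≤ N) :
    ((N !).factorization p : ℝ) ≤ (N:ℝ)/p + 2*N/(p:ℝ)^2 := by
  have h1 : (N !).factorization p ≤ N / (p - 1) := by
    rw [factorization_factorial_eq hp hN]
    exact Nat.geom_sum_Ico_le hp.two_le _ _
  have hp2 : (2:ℝ) ≤ p := by exact_mod_cast hp.two_le
  have h2 : ((N / (p-1) : ℕ) : ℝ) ≤ (N:ℝ)/((p:ℝ)-1) := by
    have := Nat.cast_div_le (α := ℝ) (m := N) (n := p-1)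
    rwa [Nat.cast_sub hp.one_le, Nat.cast_one] at this
  have h3 : (N:ℝ)/((p:ℝ)-1) ≤ (N:ℝ)/p + 2*N/(p:ℝ)^2 := by
    have hN0 : (0:ℝ) ≤ N := Nat.cast_nonneg N
    rw [div_add_div _ _ (by linarith) (by nlinarith), div_le_div_iff₀ (by linarith) (by nlinarith)]
    have hp0 : (0:ℝ) < p := by linarith
    nlinarith [mul_nonneg (mul_nonneg hN0 hp0.le) (by linarith : (0:ℝ) ≤ (p:ℝ) - 2)]
  calc ((N !).factorization p : ℝ) ≤ ((N / (p-1) : ℕ) : ℝ) := by exact_mod_cast h1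
    _ ≤ _ := h2.trans h3

lemma telescope_step {N : ℕ} (hN : 1 ≤ N) :
    4/(((N:ℝ)+1)*Real.sqrt (N+1)) ≤ 8/Real.sqrt N - 8/Real.sqrt (N+1) := by
  set a := Real.sqrt N with ha_def
  set b := Real.sqrt ((N:ℝ)+1) with hb_def
  have hN0 : (1:ℝ) ≤ N := by exact_mod_cast hN
  have ha : (0:ℝ) < a := Real.sqrt_pos.2 (by linarith)
  have hb : (0:ℝ) < b := Real.sqrt_pos.2 (by linarith)
  have ha2 : a^2 = N := Real.sq_sqrt (by linarith)
  have hb2 : b^2 = (N:ℝ)+1 := Real.sq_sqrt (by linarith)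
  have hab : a ≤ b := Real.sqrt_le_sqrt (by linarith)
  have hgoal : 4/(b^2*b) ≤ 8/a - 8/b := by
    have ht : (b-a)*(a+b) = 1 := by nlinarith
    rw [div_sub_div _ _ ha.ne' hb.ne', div_le_div_iff₀ (by positivity) (by positivity)]
    nlinarith [mul_pos ha hb, mul_pos (mul_pos hb hb) hb, sq_nonneg (a-b), sq_nonneg (a+b),
      mul_nonneg (mul_nonneg hb.le hb.le) (sub_nonneg.2 hab),
      mul_nonneg hb.le (sub_nonneg.2 hab)]
  calc 4/(((N:ℝ)+1)*b) = 4/(b^2*b) := by rw [hb2]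
    _ ≤ 8/a - 8/b := hgoal

lemma telescope_sum : ∀ N : ℕ, 1 ≤ N →
    ∑ n ∈ Icc 2 N, 4/((n:ℝ)*Real.sqrt n) ≤ 8 - 8/Real.sqrt N := by
  intro N
  induction N with
  | zero => omega
  | succ n ih =>
    intro _
    rcases Nat.eq_zero_or_pos n with rfl | hn
    · simp
    have h1 : Finset.Icc 2 (n+1) = insert (n+1) (Finset.Icc 2 n) := by
      exact (Finset.insert_Icc_right_eq_Icc_add_one (by omega)).symm
    rw [h1, Finset.sum_insert (by simp)]
    have h2 := telescope_step hn
    have h3 := ih hn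
    push_cast
    push_cast at h2
    linarith

lemma log_le_two_sqrt {x : ℝ} (hx : 1 ≤ x) : Real.log x ≤ 2 * Real.sqrt x := by
  have h0 : (0:ℝ) < x := by linarith
  have h1 : Real.log x = 2 * Real.log (Real.sqrt x) := by
    rw [Real.log_sqrt h0.le]; ring
  have h2 : Real.log (Real.sqrt x) ≤ Real.sqrt x - 1 :=
    Real.log_le_sub_one_of_pos (Real.sqrt_pos.2 h0)
  have h3 : (0:ℝ) ≤ Real.sqrt x := Real.sqrt_nonneg x
  linarith

lemma tail_bound (N : ℕ) :
    ∑ p ∈ (Iic N).filter Nat.Prime, 2 * Real.log p / (p:ℝ)^2 ≤ 8 := by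
  have step1 : ∀ p ∈ (Iic N).filter Nat.Prime,
      2 * Real.log p / (p:ℝ)^2 ≤ 4/((p:ℝ)*Real.sqrt p) := by
    intro p hp
    have hpp : p.Prime := (Finset.mem_filter.1 hp).2
    have h2 : (2:ℝ) ≤ p := by exact_mod_cast hpp.two_le
    have hs : (0:ℝ) < Real.sqrt p := Real.sqrt_pos.2 (by linarith)
    have hlog : Real.log p ≤ 2 * Real.sqrt p := log_le_two_sqrt (by linarith)
    have hsq : Real.sqrt p * Real.sqrt p = (p:ℝ) := Real.mul_self_sqrt (by linarith)
    have key : 4/((p:ℝ)*Real.sqrt p) = 4 * Real.sqrt p / (p:ℝ)^2 := by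
      rw [eq_div_iff (by positivity)]
      field_simp
      nlinarith [hsq]
    rw [key]
    apply div_le_div_of_nonneg_right ?_ (by positivity) |>.trans_eq rfl
    · linarith
  have step2 : ∑ p ∈ (Iic N).filter Nat.Prime, 2 * Real.log p / (p:ℝ)^2
      ≤ ∑ p ∈ (Iic N).filter Nat.Prime, 4/((p:ℝ)*Real.sqrt p) :=
    Finset.sum_le_sum step1
  have step3 : ∑ p ∈ (Iic N).filter Nat.Prime, 4/((p:ℝ)*Real.sqrt p)
      ≤ ∑ n ∈ Icc 2 N, 4/((n:ℝ)*Real.sqrt n) := by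
    apply Finset.sum_le_sum_of_subset_of_nonneg
    · intro p hp
      have hpp : p.Prime := (Finset.mem_filter.1 hp).2
      have := (Finset.mem_filter.1 hp).1
      simp only [Finset.mem_Iic] at this
      simp [Finset.mem_Icc, hpp.two_le, this]
    · intro n _ _
      positivity
  rcases Nat.eq_zero_or_pos N with rfl | hN
  · simpa using step2.trans step3 |>.trans (by norm_num)
  have step4 := telescope_sum N hN
  have h5 : (0:ℝ) ≤ 8 / Real.sqrt N := by positivity
  linarith

lemma theta_bound (N : ℕ) :
    ∑ p ∈ (Iic N).filter Nat.Prime, Real.log p ≤ (N:ℝ) * Real.log 4 := by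
  have hIic : Finset.Iic N = Finset.range (N+1) := by
    ext n; simp [Nat.lt_succ_iff]
  have h1 : ∑ p ∈ (Iic N).filter Nat.Prime, Real.log p
      = Real.log ((primorial N : ℕ) : ℝ) := by
    rw [primorial]
    push_cast
    rw [Real.log_prod]
    · rw [hIic]
    · intro p hp
      have hpp : p.Prime := (Finset.mem_filter.1 hp).2
      have : (0:ℝ) < p := by exact_mod_cast hpp.pos
      positivity
  rw [h1]
  calc Real.log ((primorial N : ℕ) : ℝ) ≤ Real.log ((4:ℝ)^N) := by
        apply Real.log_le_log (by exact_mod_cast primorial_pos N)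
        exact_mod_cast primorial_le_4_pow N
    _ = N * Real.log 4 := by rw [Real.log_pow]

lemma mertens_nat (N : ℕ) (hN : 2 ≤ N) :
    |(∑ p ∈ (Iic N).filter Nat.Prime, Real.log p / p) - Real.log N| ≤ 9 := by
  set P := (Iic N).filter Nat.Prime with hP
  have hN1 : 1 ≤ N := by omega
  have hNR : (2:ℝ) ≤ N := by exact_mod_cast hN
  set A := ∑ p ∈ P, Real.log p / p with hA
  have hlogp_nonneg : ∀ p ∈ P, 0 ≤ Real.log p := by
    intro p hp
    have hpp : p.Prime := (Finset.mem_filter.1 hp).2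
    apply Real.log_nonneg
    exact_mod_cast hpp.one_lt.le
  have hident := log_factorial_eq_sum N hN1
  -- lower bound on log N!
  have hlow : (N:ℝ) * A - (N:ℝ) * Real.log 4 ≤ Real.log (N !) := by
    have h1 : ∑ p ∈ P, ((N:ℝ)/p - 1) * Real.log p ≤ Real.log (N !) := by
      rw [hident]
      apply Finset.sum_le_sum
      intro p hp
      have hpp : p.Prime := (Finset.mem_filter.1 hp).2
      exact mul_le_mul_of_nonneg_right (fact_fact_lb hpp hN1) (hlogp_nonneg p hp)
    have h2 : ∑ p ∈ P, ((N:ℝ)/p - 1) * Real.log p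
        = (N:ℝ) * A - ∑ p ∈ P, Real.log p := by
      rw [hA, Finset.mul_sum, ← Finset.sum_sub_distrib]
      apply Finset.sum_congr rfl
      intro p hp
      have hpp : p.Prime := (Finset.mem_filter.1 hp).2
      have hp0 : (0:ℝ) < p := by exact_mod_cast hpp.pos
      field_simp
    have h3 := theta_bound N
    rw [h2] at h1
    linarith
  -- upper bound on log N!
  have hup : Real.log (N !) ≤ (N:ℝ) * A + (N:ℝ) * 8 := by
    have h1 : Real.log (N !) ≤ ∑ p ∈ P, ((N:ℝ)/p + 2*N/(p:ℝ)^2) * Real.log p := by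
      rw [hident]
      apply Finset.sum_le_sum
      intro p hp
      have hpp : p.Prime := (Finset.mem_filter.1 hp).2
      exact mul_le_mul_of_nonneg_right (fact_fact_ub hpp hN1) (hlogp_nonneg p hp)
    have h2 : ∑ p ∈ P, ((N:ℝ)/p + 2*N/(p:ℝ)^2) * Real.log p
        = (N:ℝ) * A + (N:ℝ) * ∑ p ∈ P, 2 * Real.log p / (p:ℝ)^2 := by
      rw [hA, Finset.mul_sum, Finset.mul_sum, ← Finset.sum_add_distrib]
      apply Finset.sum_congr rfl
      intro p hp
      have hpp : p.Prime := (Finset.mem_filter.1 hp).2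
      have hp0 : (0:ℝ) < p := by exact_mod_cast hpp.pos
      field_simp
    have h3 := tail_bound N
    have hN0 : (0:ℝ) ≤ N := by linarith
    rw [h2] at h1
    nlinarith
  have hSl := log_factorial_lower N
  have hSu := log_factorial_upper N
  have hlog4 : Real.log 4 ≤ 2 := by
    have h2 : Real.log 4 = 2 * Real.log 2 := by
      rw [show (4:ℝ) = 2^2 by norm_num, Real.log_pow]; push_cast; ring
    have := Real.log_two_lt_d9
    linarith
  have hNpos : (0:ℝ) < N := by linarith
  rw [abs_le]
  constructor
  · -- A - log N ≥ -9
    have : (N:ℝ) * Real.log N - N ≤ (N:ℝ) * A + (N:ℝ) * 8 := le_trans hSl hup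
    have h := (mul_le_mul_iff_right₀ hNpos).1 (by linarith : (N:ℝ) * (Real.log N - 9) ≤ (N:ℝ) * A)
    linarith
  · have : (N:ℝ) * A - (N:ℝ) * Real.log 4 ≤ (N:ℝ) * Real.log N := le_trans hlow hSu
    have h := (mul_le_mul_iff_right₀ hNpos).1 (by nlinarith : (N:ℝ) * A ≤ (N:ℝ) * (Real.log N + 2))
    linarith

theorem mertens_first :
    ∃ C : ℝ, ∀ y : ℝ, 2 ≤ y →
      |(∑ p ∈ (Finset.Iic ⌊y⌋₊).filter Nat.Prime, Real.log p / p) - Real.log y| ≤ C := by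
  use 10
  intro y hy
  set N := ⌊y⌋₊ with hNdef
  have hN2 : 2 ≤ N := Nat.le_floor (by exact_mod_cast hy)
  have hy0 : (0:ℝ) ≤ y := by linarith
  have hNy : (N:ℝ) ≤ y := Nat.floor_le hy0
  have hyN : y < N + 1 := Nat.lt_floor_add_one y
  have hNR : (2:ℝ) ≤ N := by exact_mod_cast hN2
  have h1 : Real.log N ≤ Real.log y := Real.log_le_log (by linarith) hNy
  have h2 : Real.log y ≤ Real.log N + Real.log 2 := by
    have : Real.log y ≤ Real.log (2 * N) := Real.log_le_log (by linarith) (by linarith)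
    rwa [Real.log_mul (by norm_num) (by linarith), add_comm] at this
  have hlog2 : Real.log 2 ≤ 1 := by
    have := Real.log_two_lt_d9; linarith
  have hmain := mertens_nat N hN2
  rw [abs_le] at hmain ⊢
  obtain ⟨hl, hu⟩ := hmain
  constructor <;> linarith
end

section
/- There exists a constant C such that for all integers j ≥ 3, the sum over primes p dividing j of (log p)/p is at most C · log(log j). -/
open Finset Real

/-- Chebyshev-type bound: θ(n) ≤ n log 4. -/
lemma theta_le (n : ℕ) :
    ∑ p ∈ (range (n + 1)).filter Nat.Prime, Real.log p ≤ n * Real.log 4 := by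
  have h1 : ∑ p ∈ (range (n + 1)).filter Nat.Prime, Real.log p
      = Real.log ((primorial n : ℕ) : ℝ) := by
    rw [primorial, Nat.cast_prod, Real.log_prod]
    intro p hp
    exact Nat.cast_ne_zero.mpr (Finset.mem_filter.mp hp).2.pos.ne'
  rw [h1]
  have h2 : ((primorial n : ℕ) : ℝ) ≤ (4 : ℝ) ^ n := by
    calc ((primorial n : ℕ) : ℝ) ≤ ((4 ^ n : ℕ) : ℝ) := by
          exact_mod_cast primorial_le_4_pow n
      _ = (4 : ℝ) ^ n := by push_cast; ring
  calc Real.log ((primorial n : ℕ) : ℝ) ≤ Real.log ((4:ℝ) ^ n) :=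
        Real.log_le_log (by exact_mod_cast (primorial_pos n)) h2
    _ = n * Real.log 4 := by rw [Real.log_pow]

lemma term_nonneg {p : ℕ} (hp : p.Prime) : 0 ≤ Real.log p / p := by
  have h1 : (1:ℝ) ≤ p := by exact_mod_cast hp.one_lt.le
  have := Real.log_nonneg h1
  positivity

lemma log_p_nonneg {p : ℕ} (hp : p.Prime) : 0 ≤ Real.log p :=
  Real.log_nonneg (by exact_mod_cast hp.one_lt.le)

/-- Mertens-type: ∑_{p ≤ n} log p / p ≤ (log₂ n + 1) · 2 log 4. -/
lemma mertens (n : ℕ) :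
    ∑ p ∈ (range (n + 1)).filter Nat.Prime, Real.log p / p
      ≤ (Nat.log 2 n + 1) * (2 * Real.log 4) := by
  have hlog4 : (0:ℝ) ≤ Real.log 4 := Real.log_nonneg (by norm_num)
  induction n using Nat.strong_induction_on with
  | _ n ih =>
    rcases lt_or_ge n 2 with hn | hn
    · have he : (range (n + 1)).filter Nat.Prime = ∅ := by
        interval_cases n <;> decide
      rw [he]
      simp
      positivity
    · have hhalf := ih (n / 2) (Nat.div_lt_self (by omega) one_lt_two)
      have hsplit := Finset.sum_filter_add_sum_filter_not
        ((range (n + 1)).filter Nat.Prime) (fun p => p ≤ n / 2)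
        (fun p => Real.log p / (p : ℝ))
      -- small part
      have hsub : ((range (n + 1)).filter Nat.Prime).filter (fun p => p ≤ n / 2)
          ⊆ (range (n / 2 + 1)).filter Nat.Prime := by
        intro p hp
        simp only [Finset.mem_filter, Finset.mem_range] at *
        exact ⟨by omega, hp.1.2⟩
      have hsmall : ∑ p ∈ ((range (n + 1)).filter Nat.Prime).filter (fun p => p ≤ n / 2),
            Real.log p / p ≤ ∑ p ∈ (range (n / 2 + 1)).filter Nat.Prime, Real.log p / p := by
        apply Finset.sum_le_sum_of_subset_of_nonneg hsub
        intro p hp _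
        exact term_nonneg (Finset.mem_filter.mp hp).2
      -- large part
      have hnpos : (0:ℝ) < n := by exact_mod_cast (by omega : 0 < n)
      have hlarge : ∑ p ∈ ((range (n + 1)).filter Nat.Prime).filter (fun p => ¬ p ≤ n / 2),
            Real.log p / p ≤ 2 * Real.log 4 := by
        have h1 : ∀ p ∈ ((range (n + 1)).filter Nat.Prime).filter (fun p => ¬ p ≤ n / 2),
            Real.log p / p ≤ Real.log p * (2 / n) := by
          intro p hp
          simp only [Finset.mem_filter, Finset.mem_range, not_le] at hp
          have hn2p : (n:ℝ) ≤ 2 * p := by exact_mod_cast (by omega : n ≤ 2 * p)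
          have hppos : (0:ℝ) < p := by exact_mod_cast hp.1.2.pos
          have hlp := log_p_nonneg hp.1.2
          rw [div_eq_mul_one_div]
          apply mul_le_mul_of_nonneg_left _ hlp
          rw [div_le_div_iff₀ hppos hnpos]
          linarith
        calc ∑ p ∈ ((range (n + 1)).filter Nat.Prime).filter (fun p => ¬ p ≤ n / 2),
              Real.log p / p
            ≤ ∑ p ∈ ((range (n + 1)).filter Nat.Prime).filter (fun p => ¬ p ≤ n / 2),
              Real.log p * (2 / n) := Finset.sum_le_sum h1
          _ = (∑ p ∈ ((range (n + 1)).filter Nat.Prime).filter (fun p => ¬ p ≤ n / 2),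
              Real.log p) * (2 / n) := by rw [Finset.sum_mul]
          _ ≤ (∑ p ∈ (range (n + 1)).filter Nat.Prime, Real.log p) * (2 / n) := by
              apply mul_le_mul_of_nonneg_right _ (by positivity)
              apply Finset.sum_le_sum_of_subset_of_nonneg (Finset.filter_subset _ _)
              intro p hp _
              exact log_p_nonneg (Finset.mem_filter.mp hp).2
          _ ≤ (n * Real.log 4) * (2 / n) := by
              apply mul_le_mul_of_nonneg_right (theta_le n) (by positivity)
          _ = 2 * Real.log 4 := by field_simp
      -- combine
      have hlogn : Nat.log 2 (n / 2) + 1 = Nat.log 2 n := by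
        rw [Nat.log_div_base]
        have : 1 ≤ Nat.log 2 n := Nat.log_pos one_lt_two hn
        omega
      have key : ∑ p ∈ (range (n + 1)).filter Nat.Prime, Real.log p / p
          ≤ (Nat.log 2 (n/2) + 1) * (2 * Real.log 4) + 2 * Real.log 4 := by
        rw [← hsplit]
        exact add_le_add (hsmall.trans hhalf) hlarge
      calc ∑ p ∈ (range (n + 1)).filter Nat.Prime, Real.log p / p
          ≤ (Nat.log 2 (n/2) + 1) * (2 * Real.log 4) + 2 * Real.log 4 := key
        _ = ((Nat.log 2 (n/2) + 1 : ℕ) + 1 : ℝ) * (2 * Real.log 4) := by push_cast; ring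
        _ = (Nat.log 2 n + 1) * (2 * Real.log 4) := by rw [hlogn]

theorem levinson_prime_divisor_bound :
    ∃ C : ℝ, ∀ j : ℕ, 3 ≤ j →
      (∑ p ∈ j.primeFactors, Real.log p / p) ≤ C * Real.log (Real.log j) := by
  have hlog4 : (0:ℝ) ≤ Real.log 4 := Real.log_nonneg (by norm_num)
  have hlog2 : (0:ℝ) < Real.log 2 := Real.log_pos one_lt_two
  have hlog3 : (1:ℝ) < Real.log 3 := by
    rw [Real.lt_log_iff_exp_lt (by norm_num)]
    exact lt_trans Real.exp_one_lt_d9 (by norm_num)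
  have hc0 : 0 < Real.log (Real.log 3) := Real.log_pos hlog3
  set B : ℝ := 2 * Real.log 4 with hB
  have hBpos : 0 ≤ B := by positivity
  refine ⟨2 * B / Real.log 2 + (B + 1) / Real.log (Real.log 3), ?_⟩
  intro j hj
  set L := Real.log j with hL
  have hL3 : Real.log 3 ≤ L := Real.log_le_log (by norm_num) (by exact_mod_cast hj)
  have hL1 : 1 < L := lt_of_lt_of_le hlog3 hL3
  have hLL : Real.log (Real.log 3) ≤ Real.log L := Real.log_le_log (by linarith) hL3
  have hLLpos : 0 < Real.log L := lt_of_lt_of_le hc0 hLL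
  set n := Nat.floor (L ^ 2) with hn
  have hx1 : (1:ℝ) ≤ L ^ 2 := by nlinarith
  have hn1 : 1 ≤ n := by
    rw [hn]
    exact Nat.le_floor (by exact_mod_cast hx1)
  have hnx : (n:ℝ) ≤ L ^ 2 := Nat.floor_le (by positivity)
  have hsplit := Finset.sum_filter_add_sum_filter_not j.primeFactors (fun p => p ≤ n)
      (fun p => Real.log p / (p:ℝ))
  -- small primes
  have hsub : j.primeFactors.filter (fun p => p ≤ n) ⊆ (range (n + 1)).filter Nat.Prime := by
    intro p hp
    simp only [Finset.mem_filter, Finset.mem_range, Nat.mem_primeFactors] at *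
    exact ⟨by omega, hp.1.1⟩
  have hsmall : ∑ p ∈ j.primeFactors.filter (fun p => p ≤ n), Real.log p / p
      ≤ (Nat.log 2 n + 1) * B := by
    refine le_trans (Finset.sum_le_sum_of_subset_of_nonneg hsub ?_) (mertens n)
    intro p hp _
    exact term_nonneg (Finset.mem_filter.mp hp).2
  have hnatlog : (Nat.log 2 n : ℝ) * Real.log 2 ≤ 2 * Real.log L := by
    have h1 : ((2:ℝ)) ^ (Nat.log 2 n) ≤ (n:ℝ) := by
      exact_mod_cast Nat.pow_log_le_self 2 (by omega)
    have h2 := Real.log_le_log (by positivity) (h1.trans hnx)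
    rw [Real.log_pow, Real.log_pow] at h2
    exact_mod_cast h2
  -- sum of log p over prime factors is at most log j
  have hprod : ∑ p ∈ j.primeFactors, Real.log p ≤ L := by
    have hd : ∏ p ∈ j.primeFactors, p ∣ j := Nat.prod_primeFactors_dvd j
    have hle : ((∏ p ∈ j.primeFactors, p : ℕ) : ℝ) ≤ (j : ℝ) := by
      exact_mod_cast Nat.le_of_dvd (by omega) hd
    have hpos : (0:ℝ) < ((∏ p ∈ j.primeFactors, p : ℕ) : ℝ) := by
      exact_mod_cast Finset.prod_pos (fun p hp => (Nat.prime_of_mem_primeFactors hp).pos)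
    have h3 := Real.log_le_log hpos hle
    rwa [Nat.cast_prod, Real.log_prod
      (fun p hp => Nat.cast_ne_zero.mpr (Nat.prime_of_mem_primeFactors hp).pos.ne')] at h3
  -- large primes
  have hlarge : ∑ p ∈ j.primeFactors.filter (fun p => ¬ p ≤ n), Real.log p / p ≤ 1 := by
    have hL2pos : (0:ℝ) < L ^ 2 := by positivity
    have h1 : ∀ p ∈ j.primeFactors.filter (fun p => ¬ p ≤ n),
        Real.log p / p ≤ Real.log p / L ^ 2 := by
      intro p hp
      simp only [Finset.mem_filter, not_le] at hp
      have hpprime := Nat.prime_of_mem_primeFactors hp.1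
      have hp1 : ((n:ℝ) + 1) ≤ (p:ℝ) := by exact_mod_cast hp.2
      have hp2 : L ^ 2 ≤ (p:ℝ) := le_trans (Nat.lt_floor_add_one _).le hp1
      exact div_le_div_of_nonneg_left (log_p_nonneg hpprime) hL2pos hp2
    calc ∑ p ∈ j.primeFactors.filter (fun p => ¬ p ≤ n), Real.log p / p
        ≤ ∑ p ∈ j.primeFactors.filter (fun p => ¬ p ≤ n), Real.log p / L ^ 2 :=
          Finset.sum_le_sum h1
      _ = (∑ p ∈ j.primeFactors.filter (fun p => ¬ p ≤ n), Real.log p) / L ^ 2 := by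
          rw [Finset.sum_div]
      _ ≤ (∑ p ∈ j.primeFactors, Real.log p) / L ^ 2 := by
          apply div_le_div_of_nonneg_right ?_ hL2pos.le
          apply Finset.sum_le_sum_of_subset_of_nonneg (Finset.filter_subset _ _)
          intro p hp _
          exact log_p_nonneg (Nat.prime_of_mem_primeFactors hp)
      _ ≤ L / L ^ 2 := div_le_div_of_nonneg_right hprod hL2pos.le
      _ ≤ 1 := by
          rw [div_le_one hL2pos]; nlinarith
  -- combine
  have htot : ∑ p ∈ j.primeFactors, Real.log p / p ≤ (Nat.log 2 n + 1) * B + 1 := by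
    rw [← hsplit]
    exact add_le_add hsmall hlarge
  have hstep : ((Nat.log 2 n : ℝ) + 1) * B ≤ 2 * B / Real.log 2 * Real.log L + B := by
    have h4 : (Nat.log 2 n : ℝ) * B * Real.log 2 ≤ 2 * Real.log L * B :=
      by nlinarith [hnatlog, hBpos]
    rw [div_mul_eq_mul_div, add_mul, one_mul, add_le_add_iff_right, le_div_iff₀ hlog2]
    nlinarith
  have hstep2 : B + 1 ≤ (B + 1) / Real.log (Real.log 3) * Real.log L := by
    rw [div_mul_eq_mul_div, le_div_iff₀ hc0]
    nlinarith [hLL, hBpos]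
  have hlogeq : Real.log (Real.log j) = Real.log L := by rw [hL]
  rw [hlogeq, add_mul]
  calc ∑ p ∈ j.primeFactors, Real.log p / p
      ≤ (Nat.log 2 n + 1) * B + 1 := htot
    _ ≤ (2 * B / Real.log 2 * Real.log L + B) + 1 := by
        have := hstep
        push_cast at this ⊢
        linarith
    _ = 2 * B / Real.log 2 * Real.log L + (B + 1) := by ring
    _ ≤ 2 * B / Real.log 2 * Real.log L + (B + 1) / Real.log (Real.log 3) * Real.log L := by
        linarith [hstep2]
end

section
/- Let m ≥ 1, let a_1, …, a_m ∈ {1, 2}, let f : [1, ∞) → ℝ be continuous, and let D ≥ 1. Then the iterated integral ∫_1^D (log^{a_1−1} x_1)/x_1 dx_1 ∫_1^{D/x_1} (log^{a_2−1} x_2)/x_2 dx_2 ⋯ ∫_1^{D/(x_1⋯x_m)} f(x_1⋯x_m·x)/x dx equals (∏_{i=1}^m (a_i−1)!) / (∑_{i=1}^m a_i)! times ∫_1^D f(x)·(log x)^{∑_{i=1}^m a_i} / x dx. -/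
open intervalIntegral

/-- Iterated integral
`∫_1^D (log x₁)^(a₁-1)/x₁ ⋯ ∫_1^{D/(x₁⋯x_m)} f(x₁⋯x_m · x)/x dx ⋯ dx₁`,
where `t` records the product of the outer variables. -/
noncomputable def iterInt (f : ℝ → ℝ) : List ℕ → ℝ → ℝ → ℝ
  | [], D, t => ∫ x in (1:ℝ)..D, f (t * x) / x
  | a :: l, D, t => ∫ x in (1:ℝ)..D, (Real.log x) ^ (a - 1) / x * iterInt f l (D / x) (t * x)

open Real MeasureTheory

/-! ### Auxiliary lemmas -/

lemma sum_binom_inv (n p : ℕ) :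
    ∑ k ∈ Finset.range (n+1), (-1:ℝ)^k * (n.choose k) / (p+1+k) =
      ((p.factorial * n.factorial : ℕ) : ℝ) / ((p+n+1).factorial : ℕ) := by
  induction n generalizing p with
  | zero =>
    have hp : ((p:ℝ)+1) ≠ 0 := by positivity
    have hf : ((p.factorial : ℝ)) ≠ 0 := by positivity
    simp [Nat.factorial_succ]
    field_simp
  | succ n ih =>
    have ihp := ih p
    have ihp1 : ∑ i ∈ Finset.range (n+1), (-1:ℝ)^i * (n.choose i) / ((p:ℝ)+2+i) =
        (((p+1).factorial * n.factorial : ℕ) : ℝ) / ((p+n+2).factorial : ℕ) := by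
      have e : (p+1)+n+1 = p+n+2 := by omega
      have := ih (p+1); rw [e] at this
      rw [← this]
      refine Finset.sum_congr rfl (fun i _ => by push_cast; ring)
    have hB : ∑ i ∈ Finset.range (n+1), (-1:ℝ)^i * (n.choose (i+1)) / ((p:ℝ)+2+i) =
        1/((p:ℝ)+1) - ∑ k ∈ Finset.range (n+1), (-1:ℝ)^k * (n.choose k) / (p+1+k) := by
      have e1 := Finset.sum_range_succ' (fun k => (-1:ℝ)^k * (n.choose k) / (p+1+k)) n
      have e2 := Finset.sum_range_succ (fun i => (-1:ℝ)^i * (n.choose (i+1)) / ((p:ℝ)+2+i)) n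
      have e3 : ∑ i ∈ Finset.range n, (-1:ℝ)^(i+1) * ((n.choose (i+1) : ℕ) : ℝ) / ((p:ℝ)+1+((i+1:ℕ):ℝ)) =
          - ∑ i ∈ Finset.range n, (-1:ℝ)^i * (n.choose (i+1)) / ((p:ℝ)+2+i) := by
        rw [← Finset.sum_neg_distrib]
        refine Finset.sum_congr rfl (fun i _ => by push_cast; ring)
      rw [e2, e1, e3]
      simp [Nat.choose_succ_self]
    have hA := Finset.sum_range_succ' (fun k => (-1:ℝ)^k * ((n+1).choose k) / (p+1+k)) (n+1)
    have hC : ∑ i ∈ Finset.range (n+1), (-1:ℝ)^(i+1) * (((n+1).choose (i+1) : ℕ) : ℝ) / ((p:ℝ)+1+((i+1:ℕ):ℝ)) =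
        -(∑ i ∈ Finset.range (n+1), (-1:ℝ)^i * (n.choose i) / ((p:ℝ)+2+i))
        - ∑ i ∈ Finset.range (n+1), (-1:ℝ)^i * (n.choose (i+1)) / ((p:ℝ)+2+i) := by
      rw [← Finset.sum_neg_distrib, ← Finset.sum_sub_distrib]
      refine Finset.sum_congr rfl (fun i _ => ?_)
      rw [Nat.choose_succ_succ]
      push_cast
      ring
    rw [hA, hC, ihp1, hB, ihp]
    have hfp : ((p.factorial : ℝ)) ≠ 0 := by positivity
    have hfn : ((n.factorial : ℝ)) ≠ 0 := by positivity
    have hd1 : (((p+n+1).factorial : ℝ)) ≠ 0 := by positivity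
    have e4 : p+(n+1)+1 = p+n+2 := by omega
    rw [e4]
    have e5 : (p+n+2).factorial = (p+n+2) * (p+n+1).factorial := Nat.factorial_succ _
    have e6 : (p+1).factorial = (p+1) * p.factorial := Nat.factorial_succ _
    have e7 : (n+1).factorial = (n+1) * n.factorial := Nat.factorial_succ _
    rw [e5, e6, e7]
    simp only [Nat.choose_zero_right]
    push_cast
    have hd2 : ((p:ℝ)+n+2) ≠ 0 := by positivity
    field_simp
    ring

lemma sum_binom_inv' (n p : ℕ) :
    ∑ m ∈ Finset.range (n+1), (-1:ℝ)^(m+n) * (n.choose m) / (((p + (n - m) : ℕ) : ℝ) + 1) =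
      ((p.factorial * n.factorial : ℕ) : ℝ) / ((p+n+1).factorial : ℕ) := by
  rw [← sum_binom_inv n p, ← Finset.sum_range_reflect]
  refine Finset.sum_congr rfl (fun j hj => ?_)
  rw [Finset.mem_range] at hj
  have hj' : j ≤ n := by omega
  have e1 : n + 1 - 1 - j = n - j := by omega
  rw [e1]
  have e2 : (n-j) + n = j + 2*(n-j) := by omega
  rw [e2, pow_add, pow_mul]
  have e3 : n.choose (n-j) = n.choose j := Nat.choose_symm hj'
  rw [e3]
  have e4 : p + (n - (n - j)) = p + j := by omega
  rw [e4]
  push_cast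
  ring_nf

lemma contOn_kernel (h : ℝ → ℝ) (hh : Continuous h) (j : ℕ) :
    ContinuousOn (fun u : ℝ => h u * Real.log u ^ j / u) (Set.Ioi 0) := by
  apply ContinuousOn.div
  · exact (hh.continuousOn.mul ((Real.continuousOn_log.mono (fun x hx => ne_of_gt hx)).pow j))
  · exact continuousOn_id
  · exact fun x hx => ne_of_gt hx

lemma kernel_intAble (h : ℝ → ℝ) (hh : Continuous h) (j : ℕ) {a b : ℝ}
    (ha : 0 < a) (hb : 0 < b) :
    IntervalIntegrable (fun u : ℝ => h u * Real.log u ^ j / u) MeasureTheory.volume a b := by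
  apply ContinuousOn.intervalIntegrable
  apply (contOn_kernel h hh j).mono
  intro x hx
  rcases Set.mem_uIcc.1 hx with ⟨h1, _⟩ | ⟨h1, _⟩
  · exact lt_of_lt_of_le ha h1
  · exact lt_of_lt_of_le hb h1

/-- `Aint h j y = ∫_1^y h(u) (log u)^j / u du`. -/
noncomputable def Aint (h : ℝ → ℝ) (j : ℕ) (y : ℝ) : ℝ :=
  ∫ u in (1:ℝ)..y, h u * Real.log u ^ j / u

lemma A_hasDeriv (h : ℝ → ℝ) (hh : Continuous h) (j : ℕ) {x : ℝ} (hx : 0 < x) :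
    HasDerivAt (Aint h j) (h x * Real.log x ^ j / x) x := by
  unfold Aint
  apply intervalIntegral.integral_hasDerivAt_right
  · exact kernel_intAble h hh j one_pos hx
  · exact (contOn_kernel h hh j).stronglyMeasurableAtFilter isOpen_Ioi x hx
  · exact (contOn_kernel h hh j).continuousAt (Ioi_mem_nhds hx)

lemma Aint_cont (h : ℝ → ℝ) (hh : Continuous h) (j : ℕ) :
    ContinuousOn (Aint h j) (Set.Ioi 0) :=
  fun x hx => ((A_hasDeriv h hh j hx).continuousAt).continuousWithinAt

lemma Aint_sub (h : ℝ → ℝ) (hh : Continuous h) (j : ℕ) {x D : ℝ} (hx : 0 < x) (hD : 0 < D) :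
    Aint h j D - Aint h j x = ∫ u in x..D, h u * Real.log u ^ j / u :=
  intervalIntegral.integral_interval_sub_left (kernel_intAble h hh j one_pos hD)
    (kernel_intAble h hh j one_pos hx)

lemma contOn_logpow (b : ℕ) : ContinuousOn (fun x : ℝ => Real.log x ^ b / x) (Set.Ioi 0) := by
  apply ContinuousOn.div
  · exact (Real.continuousOn_log.mono (fun x hx => ne_of_gt hx)).pow b
  · exact continuousOn_id
  · exact fun x hx => ne_of_gt hx

lemma logpow_intAble (b : ℕ) {a c : ℝ} (ha : 0 < a) (hc : 0 < c) :
    IntervalIntegrable (fun x : ℝ => Real.log x ^ b / x) MeasureTheory.volume a c := by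
  have := kernel_intAble (fun _ => (1:ℝ)) continuous_const b ha hc
  simpa using this

lemma termIBP (h : ℝ → ℝ) (hh : Continuous h) (b j : ℕ) {D : ℝ} (hD : 1 ≤ D) :
    (∫ x in (1:ℝ)..D, Real.log x ^ b / x * (Aint h j D - Aint h j x)) =
      (1/((b:ℝ)+1)) * ∫ x in (1:ℝ)..D, h x * Real.log x ^ (b+j+1) / x := by
  have huIcc : Set.uIcc (1:ℝ) D = Set.Icc 1 D := Set.uIcc_of_le hD
  have hmem : ∀ x ∈ Set.uIcc (1:ℝ) D, (0:ℝ) < x := by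
    intro x hx
    rw [huIcc] at hx
    linarith [hx.1]
  have step1 : (∫ x in (1:ℝ)..D, Real.log x ^ b / x * (Aint h j D - Aint h j x)) =
      ∫ x in (1:ℝ)..D, (Aint h j D - Aint h j x) * (Real.log x ^ b / x) := by
    apply intervalIntegral.integral_congr
    intro x _
    show Real.log x ^ b / x * (Aint h j D - Aint h j x)
        = (Aint h j D - Aint h j x) * (Real.log x ^ b / x)
    ring
  rw [step1]
  have hu : ∀ x ∈ Set.uIcc (1:ℝ) D, HasDerivAt (fun y => Aint h j D - Aint h j y)
      (-(h x * Real.log x ^ j / x)) x := by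
    intro x hx
    exact (A_hasDeriv h hh j (hmem x hx)).const_sub (Aint h j D)
  have hv : ∀ x ∈ Set.uIcc (1:ℝ) D, HasDerivAt (fun y => Real.log y ^ (b+1) / ((b:ℝ)+1))
      (Real.log x ^ b / x) x := by
    intro x hx
    have hx0 := hmem x hx
    have hd := ((Real.hasDerivAt_log (ne_of_gt hx0)).pow (b+1)).div_const ((b:ℝ)+1)
    convert hd using 1
    · rfl
    · rfl
    · rfl
    have hb1 : ((b:ℝ)+1) ≠ 0 := by positivity
    push_cast
    field_simp
  have hu' : IntervalIntegrable (fun x => -(h x * Real.log x ^ j / x)) volume 1 D :=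
    (kernel_intAble h hh j one_pos (by linarith)).neg
  have hv' : IntervalIntegrable (fun x => Real.log x ^ b / x) volume 1 D :=
    logpow_intAble b one_pos (by linarith)
  have ibp := intervalIntegral.integral_mul_deriv_eq_deriv_mul hu hv hu' hv'
  rw [ibp]
  have hAD : Aint h j D - Aint h j D = 0 := by ring
  have hlog1 : Real.log (1:ℝ) ^ (b+1) / ((b:ℝ)+1) = 0 := by simp
  rw [hAD, hlog1]
  have step2 : (∫ x in (1:ℝ)..D, -(h x * Real.log x ^ j / x) * (Real.log x ^ (b+1) / ((b:ℝ)+1))) =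
      ∫ x in (1:ℝ)..D, (-(1/((b:ℝ)+1))) * (h x * Real.log x ^ (b+j+1) / x) := by
    apply intervalIntegral.integral_congr
    intro x hx
    ring
  rw [step2, intervalIntegral.integral_const_mul]
  ring

lemma subst_lemma (h : ℝ → ℝ) (n : ℕ) {x D : ℝ} (hx : 1 ≤ x) (hxD : x ≤ D) :
    (∫ y in (1:ℝ)..(D/x), h (x*y) * Real.log y ^ n / y) =
      ∫ u in x..D, h u * (Real.log u - Real.log x) ^ n / u := by
  have hx0 : (0:ℝ) < x := by linarith
  have hDx : (1:ℝ) ≤ D / x := (one_le_div hx0).2 hxD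
  set F : ℝ → ℝ := fun u => h u * (Real.log u - Real.log x) ^ n * (x/u) with hF
  have step1 : (∫ y in (1:ℝ)..(D/x), h (x*y) * Real.log y ^ n / y) =
      ∫ y in (1:ℝ)..(D/x), F (x*y) := by
    apply intervalIntegral.integral_congr
    intro y hy
    rw [Set.uIcc_of_le hDx] at hy
    have hy0 : (0:ℝ) < y := by linarith [hy.1]
    show h (x*y) * Real.log y ^ n / y = F (x*y)
    simp only [hF]
    rw [Real.log_mul (ne_of_gt hx0) (ne_of_gt hy0)]
    have e : Real.log x + Real.log y - Real.log x = Real.log y := by ring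
    rw [e]
    have e2 : x / (x*y) = 1/y := by
      rw [div_eq_div_iff (by positivity) hy0.ne']
      ring
    rw [e2]
    ring
  rw [step1, intervalIntegral.integral_comp_mul_left F (ne_of_gt hx0)]
  have e1 : x * 1 = x := mul_one x
  have e2 : x * (D / x) = D := by field_simp
  rw [e1, e2, smul_eq_mul, ← intervalIntegral.integral_const_mul]
  apply intervalIntegral.integral_congr
  intro u hu
  rw [Set.uIcc_of_le hxD] at hu
  have hu0 : (0:ℝ) < u := by linarith [hu.1]
  show x⁻¹ * F u = h u * (Real.log u - Real.log x) ^ n / u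
  simp only [hF]
  field_simp

lemma coreB (h : ℝ → ℝ) (hh : Continuous h) (p n : ℕ) {D : ℝ} (hD : 1 ≤ D) :
    (∫ x in (1:ℝ)..D, Real.log x ^ p / x * ∫ u in x..D, h u * (Real.log u - Real.log x)^n / u) =
      (((p.factorial * n.factorial : ℕ):ℝ) / ((p+n+1).factorial : ℕ)) *
        ∫ x in (1:ℝ)..D, h x * Real.log x ^ (p+n+1) / x := by
  have hD0 : (0:ℝ) < D := by linarith
  have key : ∀ x ∈ Set.uIcc (1:ℝ) D,
      Real.log x ^ p / x * (∫ u in x..D, h u * (Real.log u - Real.log x)^n / u)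
      = ∑ m ∈ Finset.range (n+1), ((-1:ℝ)^(m+n) * (n.choose m)) *
          (Real.log x ^ (p+(n-m)) / x * (Aint h m D - Aint h m x)) := by
    intro x hx
    rw [Set.uIcc_of_le hD] at hx
    obtain ⟨hx1, hxD⟩ := hx
    have hx0 : (0:ℝ) < x := by linarith
    have inner : (∫ u in x..D, h u * (Real.log u - Real.log x)^n / u)
        = ∑ m ∈ Finset.range (n+1), ((-1:ℝ)^(m+n) * (n.choose m) * Real.log x ^ (n-m)) *
            (Aint h m D - Aint h m x) := by
      have e1 : (∫ u in x..D, h u * (Real.log u - Real.log x)^n / u)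
          = ∫ u in x..D, ∑ m ∈ Finset.range (n+1),
              ((-1:ℝ)^(m+n) * (n.choose m) * Real.log x ^ (n-m)) *
                (h u * Real.log u ^ m / u) := by
        apply intervalIntegral.integral_congr
        intro u _
        show h u * (Real.log u - Real.log x)^n / u = _
        rw [sub_pow (Real.log u) (Real.log x) n, Finset.mul_sum, Finset.sum_div]
        apply Finset.sum_congr rfl
        intro m _
        ring
      rw [e1, intervalIntegral.integral_finset_sum]
      · apply Finset.sum_congr rfl
        intro m _
        rw [intervalIntegral.integral_const_mul, Aint_sub h hh m hx0 hD0]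
      · intro m _
        exact (kernel_intAble h hh m hx0 hD0).const_mul _
    rw [inner, Finset.mul_sum]
    apply Finset.sum_congr rfl
    intro m _
    ring
  rw [intervalIntegral.integral_congr key, intervalIntegral.integral_finset_sum]
  swap
  · intro m _
    apply IntervalIntegrable.const_mul
    apply ContinuousOn.intervalIntegrable
    have hsub : Set.uIcc (1:ℝ) D ⊆ Set.Ioi 0 := by
      rw [Set.uIcc_of_le hD]
      intro x hx
      have := hx.1
      simp only [Set.mem_Ioi]
      linarith
    exact (((contOn_logpow _).mono hsub).mul
      ((continuousOn_const.sub ((Aint_cont h hh m).mono hsub))))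
  have step : ∀ m ∈ Finset.range (n+1),
      ((-1:ℝ)^(m+n) * (n.choose m)) *
        (∫ x in (1:ℝ)..D, Real.log x ^ (p+(n-m)) / x * (Aint h m D - Aint h m x))
      = ((-1:ℝ)^(m+n) * (n.choose m) / (((p + (n - m) : ℕ) : ℝ) + 1)) *
          ∫ x in (1:ℝ)..D, h x * Real.log x ^ (p+n+1) / x := by
    intro m hm
    rw [Finset.mem_range] at hm
    have e : (p+(n-m)) + m + 1 = p+n+1 := by omega
    rw [termIBP h hh (p+(n-m)) m hD, e]
    ring
  rw [Finset.sum_congr rfl (fun m _ => intervalIntegral.integral_const_mul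
    ((-1:ℝ)^(m+n) * ((n.choose m : ℕ):ℝ)) _)]
  calc ∑ m ∈ Finset.range (n+1), ((-1:ℝ)^(m+n) * (n.choose m)) *
        ∫ x in (1:ℝ)..D, Real.log x ^ (p+(n-m)) / x * (Aint h m D - Aint h m x)
      = ∑ m ∈ Finset.range (n+1), ((-1:ℝ)^(m+n) * (n.choose m) / (((p + (n - m) : ℕ) : ℝ) + 1)) *
          ∫ x in (1:ℝ)..D, h x * Real.log x ^ (p+n+1) / x := by
        refine Finset.sum_congr rfl ?_
        intro m hm
        exact step m hm
    _ = (((p.factorial * n.factorial : ℕ):ℝ) / ((p+n+1).factorial : ℕ)) *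
          ∫ x in (1:ℝ)..D, h x * Real.log x ^ (p+n+1) / x := by
        rw [← Finset.sum_mul, sum_binom_inv' n p]

lemma iterInt_eq (h : ℝ → ℝ) (hh : Continuous h) (l : List ℕ)
    (hl : ∀ i ∈ l, i = 1 ∨ i = 2) : ∀ (t D : ℝ), 1 ≤ D →
    iterInt h l D t =
      (((l.map (fun i => Nat.factorial (i-1))).prod : ℕ) : ℝ) / ((l.sum).factorial : ℕ) *
        ∫ x in (1:ℝ)..D, h (t*x) * Real.log x ^ l.sum / x := by
  induction l with
  | nil =>
    intro t D hD
    simp only [iterInt, List.map_nil, List.prod_nil, List.sum_nil, Nat.factorial_zero,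
      Nat.cast_one, pow_zero, mul_one, div_one, one_mul]
  | cons a l ih =>
    intro t D hD
    have ha : a = 1 ∨ a = 2 := hl a List.mem_cons_self
    have ha1 : 1 ≤ a := by rcases ha with h' | h' <;> omega
    have hA : a - 1 + 1 = a := by omega
    set g : ℝ → ℝ := fun u => h (t*u) with hg
    have hgc : Continuous g := hh.comp (continuous_mul_left t)
    set s := l.sum with hs
    have key : ∀ x ∈ Set.uIcc (1:ℝ) D,
        (Real.log x) ^ (a - 1) / x * iterInt h l (D / x) (t * x)
        = ((((l.map (fun i => Nat.factorial (i-1))).prod : ℕ) : ℝ) / ((s).factorial : ℕ)) *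
            (Real.log x ^ (a-1) / x * ∫ u in x..D, g u * (Real.log u - Real.log x) ^ s / u) := by
      intro x hx
      rw [Set.uIcc_of_le hD] at hx
      obtain ⟨hx1, hxD⟩ := hx
      have hx0 : (0:ℝ) < x := by linarith
      have hDx : (1:ℝ) ≤ D / x := (one_le_div hx0).2 hxD
      rw [ih (fun i hi => hl i (List.mem_cons_of_mem a hi)) (t*x) (D/x) hDx]
      have e1 : (∫ y in (1:ℝ)..(D/x), h (t*x*y) * Real.log y ^ s / y)
          = ∫ y in (1:ℝ)..(D/x), g (x*y) * Real.log y ^ s / y := by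
        apply intervalIntegral.integral_congr
        intro y _
        show h (t*x*y) * Real.log y ^ s / y = h (t*(x*y)) * Real.log y ^ s / y
        rw [mul_assoc]
      rw [e1, subst_lemma g s hx1 hxD]
      ring
    rw [show iterInt h (a :: l) D t = ∫ x in (1:ℝ)..D,
        (Real.log x) ^ (a - 1) / x * iterInt h l (D / x) (t * x) from rfl]
    rw [intervalIntegral.integral_congr key, intervalIntegral.integral_const_mul,
      coreB g hgc (a-1) s hD]
    have e2 : (a-1) + s + 1 = a + s := by omega
    rw [e2]
    have e3 : (∫ x in (1:ℝ)..D, g x * Real.log x ^ (a+s) / x)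
        = ∫ x in (1:ℝ)..D, h (t*x) * Real.log x ^ (List.sum (a :: l)) / x := by
      rw [List.sum_cons]
    rw [e3]
    rw [List.map_cons, List.prod_cons, List.sum_cons]
    have hfs : ((s.factorial : ℝ)) ≠ 0 := by positivity
    have hfas : (((a+s).factorial : ℝ)) ≠ 0 := by positivity
    push_cast
    field_simp
    ring

lemma iterInt_congr (f₁ f₂ : ℝ → ℝ) (hfg : ∀ x : ℝ, 1 ≤ x → f₁ x = f₂ x) (l : List ℕ) :
    ∀ (t D : ℝ), 1 ≤ D → 1 ≤ t → iterInt f₁ l D t = iterInt f₂ l D t := by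
  induction l with
  | nil =>
    intro t D hD ht
    apply intervalIntegral.integral_congr
    intro x hx
    rw [Set.uIcc_of_le hD] at hx
    have : (1:ℝ) ≤ t * x := by nlinarith [hx.1]
    show f₁ (t*x) / x = f₂ (t*x) / x
    rw [hfg _ this]
  | cons a l ih =>
    intro t D hD ht
    apply intervalIntegral.integral_congr
    intro x hx
    rw [Set.uIcc_of_le hD] at hx
    obtain ⟨hx1, hxD⟩ := hx
    have hx0 : (0:ℝ) < x := by linarith
    show Real.log x ^ (a-1) / x * iterInt f₁ l (D/x) (t*x)
        = Real.log x ^ (a-1) / x * iterInt f₂ l (D/x) (t*x)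
    rw [ih (t*x) (D/x) ((one_le_div hx0).2 hxD) (by nlinarith)]

theorem iterated_log_integral (m : ℕ) (hm : 1 ≤ m) (a : List ℕ) (ha : a.length = m)
    (ha12 : ∀ i ∈ a, i = 1 ∨ i = 2) (f : ℝ → ℝ) (hf : ContinuousOn f (Set.Ici 1))
    (D : ℝ) (hD : 1 ≤ D) :
    iterInt f a D 1 =
      ((a.map (fun i => Nat.factorial (i - 1))).prod : ℕ) / (Nat.factorial a.sum : ℝ) *
        ∫ x in (1:ℝ)..D, f x * (Real.log x) ^ a.sum / x := by
  set g : ℝ → ℝ := fun x => f (max 1 x) with hgdef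
  have hgc : Continuous g :=
    hf.comp_continuous (continuous_const.max continuous_id) (fun x => le_max_left 1 x)
  have hfg : ∀ x : ℝ, 1 ≤ x → f x = g x := by
    intro x hx
    simp only [hgdef, max_eq_right hx]
  rw [iterInt_congr f g hfg a 1 D hD le_rfl]
  rw [iterInt_eq g hgc a ha12 1 D hD]
  congr 1
  apply intervalIntegral.integral_congr
  intro x hx
  rw [Set.uIcc_of_le hD] at hx
  show g (1*x) * Real.log x ^ a.sum / x = f x * Real.log x ^ a.sum / x
  rw [one_mul, ← hfg x hx.1]
end

section
/- Let r ≥ 1 be an integer, let f be a polynomial with real coefficients, let K = T(log T)^{-2}, and let A_r be as in the asymptotic ∑_{k≤x} d_r(k)²/k = A_r(log x)^{r²} + O((log T)^{r²−1}). Then for every ε > 0, ∑_{k ≤ K} (d_r(k)²/k)·f((log(K/k))/log K)² = A_r r² (log T)^{r²} ∫_0^1 (1−u)^{r²−1} f(u)² du + O((log T)^{r²−1+ε}) as T → ∞, where the implied constant depends on r, ε, and f. -/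
open ArithmeticFunction Finset
set_option maxHeartbeats 1000000

/-- The `r`-fold divisor function. -/
def dFold (r : ℕ) (n : ℕ) : ℕ := (ArithmeticFunction.zeta ^ r) n

lemma abel_aux (E ψ : ℕ → ℝ) (hE0 : E 0 = 0) (N : ℕ) :
    ∑ n ∈ Icc 1 N, (E n - E (n-1)) * ψ n
      = E N * ψ N - ∑ n ∈ Icc 1 (N-1), E n * (ψ (n+1) - ψ n) := by
  induction N with
  | zero => simp [hE0]
  | succ N ih =>
    rw [Finset.sum_Icc_succ_top (by omega), ih]
    rcases Nat.eq_zero_or_pos N with h | h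
    · subst h; simp [hE0]
    · have h1 : N - 1 + 1 = N := by omega
      have h2 : (N + 1 : ℕ) - 1 = N := by omega
      rw [h2, ← h1, Finset.sum_Icc_succ_top (by omega), h1]
      ring

lemma pow_sub_pow_le_aux (q : ℕ) {a b : ℝ} (ha : 0 ≤ a) (hab : a ≤ b) :
    b ^ q - a ^ q ≤ q * b ^ (q - 1) * (b - a) := by
  induction q with
  | zero => simp
  | succ q ih =>
    have hb : 0 ≤ b := ha.trans hab
    rcases Nat.eq_zero_or_pos q with h | h
    · subst h; norm_num
    · have h2 : a ^ q ≤ b ^ q := pow_le_pow_left₀ ha hab q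
      have h3 : b * (b ^ q - a ^ q) ≤ b * (q * b ^ (q - 1) * (b - a)) :=
        mul_le_mul_of_nonneg_left ih hb
      have h6 : b ^ (q - 1) * b = b ^ q := by rw [← pow_succ]; congr 1; omega
      have h4 : b * ((q:ℝ) * b ^ (q - 1) * (b - a)) = (q:ℝ) * b ^ q * (b - a) := by
        rw [← h6]; ring
      have h5 : a ^ q * (b - a) ≤ b ^ q * (b - a) :=
        mul_le_mul_of_nonneg_right h2 (sub_nonneg.2 hab)
      have h1 : b ^ (q + 1) - a ^ (q + 1) = b * (b ^ q - a ^ q) + a ^ q * (b - a) := by ring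
      have hc : ((q + 1 : ℕ) : ℝ) = (q : ℝ) + 1 := by push_cast; ring
      rw [hc]
      simp only [Nat.add_sub_cancel]
      linarith

lemma sum_inv_sq_aux (N : ℕ) : ∑ n ∈ Icc 2 N, (((n : ℝ) - 1) ^ 2)⁻¹ ≤ 2 := by
  have key : ∀ M : ℕ, 1 ≤ M → ∑ n ∈ Icc 2 (M + 1), (((n : ℝ) - 1) ^ 2)⁻¹ ≤ 2 - (M : ℝ)⁻¹ := by
    intro M hM
    induction M with
    | zero => omega
    | succ M ih =>
      rcases Nat.eq_zero_or_pos M with h | h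
      · subst h; norm_num
      · have hIH := ih h
        rw [Finset.sum_Icc_succ_top (by omega)]
        have hM0 : (0:ℝ) < M := by positivity
        have h1 : ((M + 1 + 1 : ℕ) : ℝ) - 1 = (M : ℝ) + 1 := by push_cast; ring
        rw [h1]
        have e : (M:ℝ)⁻¹ - ((M:ℝ)+1)⁻¹ = (((M:ℝ)) * ((M:ℝ)+1))⁻¹ := by field_simp; ring
        have h2 : (((M:ℝ) + 1) ^ 2)⁻¹ ≤ (M:ℝ)⁻¹ - ((M:ℝ) + 1)⁻¹ := by
          rw [e]
          apply inv_anti₀ (by positivity) (by nlinarith)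
        push_cast
        linarith
  rcases le_or_gt N 1 with h | h
  · have he : Icc 2 N = ∅ := by apply Finset.Icc_eq_empty; omega
    simp [he]
  · obtain ⟨M, rfl⟩ : ∃ M, N = M + 1 := ⟨N - 1, by omega⟩
    have hM1 : 1 ≤ M := by omega
    have hM0 : (0:ℝ) < M := by positivity
    have hMinv : (0:ℝ) ≤ (M:ℝ)⁻¹ := by positivity
    linarith [key M hM1]

lemma dFold_one_aux (r : ℕ) : dFold r 1 = 1 := by
  unfold dFold
  induction r with
  | zero => rfl
  | succ n ih =>
    rw [pow_succ, ArithmeticFunction.mul_apply_one, ih, ArithmeticFunction.zeta_apply]; simp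

lemma half_aux {s t l : ℝ} (h1 : 8 ≤ s) (h2 : s^2 = t) (h3 : l ≤ 2*s - 2) :
    t/2 ≤ t - 2*l := by nlinarith

lemma logdiv_aux {a e : ℝ} (he : 0 < e) (h1 : Real.log (a ^ e) = e * Real.log a)
    (h2 : Real.log (a ^ e) ≤ a ^ e - 1) : Real.log a ≤ a ^ e / e := by
  rw [le_div_iff₀ he]; nlinarith

theorem diagonal_term_D1 (r : ℕ) (hr : 1 ≤ r) (f : Polynomial ℝ) (A : ℝ)
    (hA : ∃ C : ℝ, ∀ T x : ℝ, 2 ≤ x → x ≤ T →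
      |(∑ k ∈ Finset.Icc 1 ⌊x⌋₊, (dFold r k : ℝ) ^ 2 / k) - A * (Real.log x) ^ (r ^ 2)|
        ≤ C * (Real.log T) ^ (r ^ 2 - 1))
    (ε : ℝ) (hε : 0 < ε) :
    ∃ C T₀ : ℝ, ∀ T : ℝ, T₀ ≤ T →
      |(∑ k ∈ Finset.Icc 1 ⌊T * (Real.log T) ^ (-2 : ℤ)⌋₊,
          (dFold r k : ℝ) ^ 2 / k *
            (f.eval (Real.log ((T * (Real.log T) ^ (-2 : ℤ)) / k) /
              Real.log (T * (Real.log T) ^ (-2 : ℤ)))) ^ 2) -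
        A * (r : ℝ) ^ 2 * (Real.log T) ^ (r ^ 2) *
          ∫ u in (0:ℝ)..1, (1 - u) ^ (r ^ 2 - 1) * (f.eval u) ^ 2|
      ≤ C * (Real.log T) ^ (((r : ℝ) ^ 2 - 1) + ε) := by
  obtain ⟨C', hC⟩ := hA
  set C₀ : ℝ := max C' 1 with hC₀def
  have hC₀1 : (1:ℝ) ≤ C₀ := le_max_right _ _
  have hC₀0 : (0:ℝ) ≤ C₀ := by linarith
  -- the polynomial P = f^2 and its bounds on [0,1]
  set P : ℝ → ℝ := fun v => (f.eval v) ^ 2 with hPdef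
  have hPc : Continuous P := (f.continuous).pow 2
  obtain ⟨Mp', hMp'⟩ := (isCompact_Icc (a := (0:ℝ)) (b := 1)).exists_bound_of_continuousOn
    hPc.continuousOn
  set Mp : ℝ := max Mp' 0 with hMpdef
  have hMp0 : 0 ≤ Mp := le_max_right _ _
  have hMp : ∀ v ∈ Set.Icc (0:ℝ) 1, |P v| ≤ Mp := fun v hv =>
    le_trans (hMp' v hv) (le_max_left _ _)
  obtain ⟨M', hM'⟩ := (isCompact_Icc (a := (0:ℝ)) (b := 1)).exists_bound_of_continuousOn
    (((f^2).derivative).continuous).continuousOn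
  set M : ℝ := max M' 0 with hMdef
  have hM0 : 0 ≤ M := le_max_right _ _
  have hLip : ∀ v ∈ Set.Icc (0:ℝ) 1, ∀ w ∈ Set.Icc (0:ℝ) 1, |P v - P w| ≤ M * |v - w| := by
    intro v hv w hw
    have key := Convex.norm_image_sub_le_of_norm_deriv_le
      (f := fun x => (f^2).eval x) (s := Set.Icc (0:ℝ) 1) (C := M)
      (fun x _ => (f^2).differentiableAt)
      (fun x hx => by
        rw [Polynomial.deriv]
        exact le_trans (hM' x hx) (le_max_left M' 0))
      (convex_Icc 0 1) hw hv
    have he : ∀ z : ℝ, (f^2).eval z = P z := by intro z; simp [hPdef, Polynomial.eval_pow]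
    simpa [Real.norm_eq_abs, he] using key
  set I₀ : ℝ := ∫ u in (0:ℝ)..1, (1 - u) ^ (r ^ 2 - 1) * (f.eval u) ^ 2 with hI₀def
  have hq1 : 1 ≤ r ^ 2 := Nat.one_le_pow _ _ (by omega)
  refine ⟨(C₀ * Mp + C₀ * M) + |A| * (2 * M * (r:ℝ)^2) + |A| * ((r:ℝ)^2 * Mp)
      + |A| * (r:ℝ)^2 * ((r:ℝ)^2 * 2 * |I₀|) / ε, Real.exp 64, ?_⟩
  intro T hT
  have hT0 : (0:ℝ) < T := lt_of_lt_of_le (Real.exp_pos 64) hT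
  set L1 : ℝ := Real.log T with hL1def
  have hL1_64 : (64:ℝ) ≤ L1 := (Real.le_log_iff_exp_le hT0).2 hT
  have hL1_1 : (1:ℝ) ≤ L1 := by linarith
  have hL1_0 : (0:ℝ) < L1 := by linarith
  have hlogL1_0 : 0 ≤ Real.log L1 := Real.log_nonneg hL1_1
  set K : ℝ := T * L1 ^ (-2 : ℤ) with hKdef
  have hK0 : (0:ℝ) < K := by
    have : (0:ℝ) < L1 ^ (-2:ℤ) := zpow_pos hL1_0 _
    positivity
  set L : ℝ := Real.log K with hLdef
  have hs8 : (8:ℝ) ≤ Real.sqrt L1 := by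
    have h1 : Real.sqrt 64 ≤ Real.sqrt L1 := Real.sqrt_le_sqrt hL1_64
    have h2 : Real.sqrt 64 = 8 := by
      rw [show (64:ℝ) = 8^2 by norm_num, Real.sqrt_sq (by norm_num)]
    linarith
  have hsq : Real.sqrt L1 ^ 2 = L1 := Real.sq_sqrt hL1_0.le
  have hlog_sqrt : Real.log L1 ≤ 2 * Real.sqrt L1 - 2 := by
    have h1 : Real.log (Real.sqrt L1) = Real.log L1 / 2 := Real.log_sqrt hL1_0.le
    have h2 : Real.log (Real.sqrt L1) ≤ Real.sqrt L1 - 1 :=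
      Real.log_le_sub_one_of_pos (by positivity)
    linarith
  have hLeq : L = L1 - 2 * Real.log L1 := by
    rw [hLdef, hKdef, Real.log_mul hT0.ne' (by positivity), Real.log_zpow]
    push_cast
    ring
  have hLhalf : L1/2 ≤ L := by rw [hLeq]; exact half_aux hs8 hsq hlog_sqrt
  have hLleL1 : L ≤ L1 := by rw [hLeq]; linarith
  have hL32 : (32:ℝ) ≤ L := by linarith
  have hL0 : (0:ℝ) < L := by linarith
  have hL1' : (1:ℝ) ≤ L := by linarith
  have hKexp : K = Real.exp L := (Real.exp_log hK0).symm
  have hK33 : (33:ℝ) ≤ K := by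
    rw [hKexp]
    have := Real.add_one_le_exp L
    linarith
  have hKT : K ≤ T := by
    rw [hKdef]
    have h2 : L1 ^ (-2:ℤ) = (L1 ^ (2:ℕ))⁻¹ := by
      rw [zpow_neg, show ((2:ℤ)) = ((2:ℕ):ℤ) from rfl, zpow_natCast]
    have h3 : (1:ℝ) ≤ L1 ^ (2:ℕ) := one_le_pow₀ hL1_1
    have h4 : L1 ^ (-2:ℤ) ≤ 1 := by rw [h2]; exact inv_le_one_of_one_le₀ h3
    calc T * L1 ^ (-2:ℤ) ≤ T * 1 := by
          apply mul_le_mul_of_nonneg_left h4 hT0.le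
      _ = T := mul_one T
  set N : ℕ := ⌊K⌋₊ with hNdef
  have hN3 : 3 ≤ N := Nat.le_floor (by push_cast; linarith)
  have hN1 : 1 ≤ N := by omega
  have hNK : (N:ℝ) ≤ K := Nat.floor_le hK0.le
  have hKN : K < N + 1 := Nat.lt_floor_add_one K
  have hN0 : (0:ℝ) < (N:ℝ) := by
    have : (3:ℝ) ≤ (N:ℝ) := by exact_mod_cast Nat.cast_le.mpr hN3
    linarith
  -- the function u(x) and its properties
  set U : ℝ → ℝ := fun x => 1 - Real.log x / L with hUdef
  have hU1 : U 1 = 1 := by simp [hUdef]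
  have hUmem : ∀ x : ℝ, 1 ≤ x → x ≤ K → U x ∈ Set.Icc (0:ℝ) 1 := by
    intro x h1 h2
    have hx0 : (0:ℝ) < x := by linarith
    have hl0 : 0 ≤ Real.log x := Real.log_nonneg h1
    have hlL : Real.log x ≤ L := by rw [hLdef]; exact Real.log_le_log hx0 h2
    constructor
    · rw [hUdef]; simp only
      have : Real.log x / L ≤ 1 := by rw [div_le_one hL0]; exact hlL
      linarith
    · rw [hUdef]; simp only
      have : 0 ≤ Real.log x / L := div_nonneg hl0 hL0.le
      linarith
  have hUanti : ∀ x y : ℝ, 1 ≤ x → x ≤ y → U y ≤ U x := by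
    intro x y h1 h2
    rw [hUdef]; simp only
    have hxy : Real.log x ≤ Real.log y := Real.log_le_log (by linarith) h2
    have hd : Real.log x / L ≤ Real.log y / L := by gcongr
    linarith
  -- partial sums and the error function
  set S : ℕ → ℝ := fun n => ∑ k ∈ Icc 1 n, (dFold r k : ℝ) ^ 2 / k with hSdef
  set φ : ℕ → ℝ := fun n => Real.log (n:ℝ) ^ (r^2) with hφdef
  set E : ℕ → ℝ := fun n => S n - A * φ n with hEdef
  have hφ0 : φ 0 = 0 := by
    rw [hφdef]; simp only [Nat.cast_zero, Real.log_zero]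
    exact zero_pow (by omega)
  have hφ1 : φ 1 = 0 := by
    rw [hφdef]; simp only [Nat.cast_one, Real.log_one]
    exact zero_pow (by omega)
  have hE0 : E 0 = 0 := by
    rw [hEdef]; simp only
    rw [hφ0, hSdef]; simp
  -- rewrite the goal sum
  have hsum1 : (∑ k ∈ Finset.Icc 1 N,
      (dFold r k : ℝ) ^ 2 / k * (f.eval (Real.log (K / k) / L)) ^ 2)
      = ∑ n ∈ Icc 1 N, (dFold r n : ℝ) ^ 2 / n * P (U n) := by
    apply Finset.sum_congr rfl
    intro k hk
    obtain ⟨hk1, hk2⟩ := Finset.mem_Icc.1 hk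
    have hk0 : ((k:ℝ)) ≠ 0 := by
      have : (1:ℝ) ≤ (k:ℝ) := by exact_mod_cast hk1
      linarith
    congr 1
    rw [hPdef]; simp only
    congr 2
    rw [Real.log_div hK0.ne' hk0, hUdef]
    simp only
    rw [← hLdef, sub_div, div_self hL0.ne']
  have hSdiff : ∀ n : ℕ, 1 ≤ n → S n - S (n-1) = (dFold r n : ℝ)^2 / n := by
    intro n hn
    obtain ⟨m0, rfl⟩ : ∃ m0, n = m0 + 1 := ⟨n-1, by omega⟩
    simp only [Nat.add_sub_cancel]
    rw [hSdef]; simp only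
    rw [Finset.sum_Icc_succ_top (by omega)]
    ring
  have hterm : ∀ n ∈ Icc 1 N, (dFold r n : ℝ)^2 / n * P (U n)
      = (E n - E (n-1)) * P (U n) + A * ((φ n - φ (n-1)) * P (U n)) := by
    intro n hn
    have h1 : 1 ≤ n := (Finset.mem_Icc.1 hn).1
    have hE : E n - E (n-1) = (dFold r n : ℝ)^2 / n - A * (φ n - φ (n-1)) := by
      rw [hEdef]; simp only
      rw [← hSdiff n h1]; ring
    rw [hE]; ring
  have hdecomp : ∑ n ∈ Icc 1 N, (dFold r n : ℝ)^2 / n * P (U n)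
      = (E N * P (U N) - ∑ n ∈ Icc 1 (N-1), E n * (P (U ((n+1:ℕ))) - P (U n)))
        + A * ∑ n ∈ Icc 1 N, (φ n - φ (n-1)) * P (U n) := by
    rw [Finset.sum_congr rfl hterm, Finset.sum_add_distrib, ← Finset.mul_sum]
    congr 1
    exact abel_aux E (fun n => P (U n)) hE0 N
  have hL1m1 : (1:ℝ) ≤ L1 ^ (r^2-1) := one_le_pow₀ hL1_1
  have hL1m0 : (0:ℝ) ≤ L1 ^ (r^2-1) := by linarith
  have hEbound : ∀ n : ℕ, 1 ≤ n → n ≤ N → |E n| ≤ C₀ * L1 ^ (r^2-1) := by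
    intro n h1 h2
    rcases eq_or_lt_of_le h1 with h | h
    · have hE1 : E 1 = 1 := by
        rw [hEdef]; simp only
        rw [hφ1, hSdef]; simp [dFold_one_aux]
      rw [← h, hE1, abs_one]
      calc (1:ℝ) = 1 * 1 := by norm_num
        _ ≤ C₀ * L1 ^ (r^2-1) := mul_le_mul hC₀1 hL1m1 zero_le_one hC₀0
    · have h2n : 2 ≤ n := h
      have hcast2 : (2:ℝ) ≤ (n:ℝ) := by exact_mod_cast h2n
      have hcastT : (n:ℝ) ≤ T := by
        have : (n:ℝ) ≤ (N:ℝ) := by exact_mod_cast h2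
        linarith [hNK, hKT]
      have key := hC T n hcast2 hcastT
      rw [Nat.floor_natCast] at key
      have hEn : E n = (∑ k ∈ Icc 1 n, (dFold r k:ℝ)^2/k) - A * Real.log n ^ (r^2) := by
        rw [hEdef, hSdef, hφdef]
      rw [hEn]
      exact le_trans key (mul_le_mul_of_nonneg_right (le_max_left C' 1) (by positivity))
  have hUmemN : ∀ n : ℕ, 1 ≤ n → n ≤ N → U n ∈ Set.Icc (0:ℝ) 1 := by
    intro n a b
    exact hUmem n (by exact_mod_cast a) (le_trans (by exact_mod_cast b) hNK)
  have htel : ∑ n ∈ Icc 1 (N-1), (U n - U ((n+1:ℕ))) = U 1 - U N := by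
    rw [← Finset.Ico_add_one_right_eq_Icc, Finset.sum_Ico_eq_sum_range]
    have he : N - 1 + 1 - 1 = N - 1 := by omega
    rw [he]
    have key := Finset.sum_range_sub' (fun i => U ((1+i : ℕ) : ℝ)) (N-1)
    simp only [← add_assoc] at key
    rw [key, show 1+(N-1) = N from by omega]
    norm_num
  have habs_sub : ∀ a b : ℝ, |a - b| ≤ |a| + |b| := by
    intro a b
    rw [sub_eq_add_neg]
    exact (abs_add_le _ _).trans (by rw [abs_neg])
  have hX1 : |E N * P (U N) - ∑ n ∈ Icc 1 (N-1), E n * (P (U ((n+1:ℕ))) - P (U n))|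
      ≤ (C₀ * Mp + C₀ * M) * L1 ^ (r^2-1) := by
    have hterm2 : ∀ n ∈ Icc 1 (N-1), |E n * (P (U ((n+1:ℕ))) - P (U n))|
        ≤ (C₀ * L1^(r^2-1) * M) * (U n - U ((n+1:ℕ))) := by
      intro n hn
      obtain ⟨ha, hb⟩ := Finset.mem_Icc.1 hn
      have hn1 : n ≤ N := by omega
      have hn2 : n + 1 ≤ N := by omega
      have hm1 := hUmemN n ha hn1
      have hm2 := hUmemN (n+1) (by omega) hn2
      have hanti : U ((n+1:ℕ)) ≤ U (n:ℕ) := by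
        apply hUanti _ _ (by exact_mod_cast ha)
        push_cast; linarith
      rw [abs_mul]
      have h1 := hEbound n ha hn1
      have h2 := hLip _ hm2 _ hm1
      have h3 : |U ((n+1:ℕ):ℝ) - U (n:ℕ)| = U (n:ℕ) - U ((n+1:ℕ)) := by
        rw [abs_sub_comm, abs_of_nonneg (by linarith)]
      rw [h3] at h2
      calc |E n| * |P (U ((n+1:ℕ))) - P (U (n:ℕ))|
          ≤ (C₀ * L1^(r^2-1)) * (M * (U (n:ℕ) - U ((n+1:ℕ)))) := by
            apply mul_le_mul h1 h2 (abs_nonneg _) (by positivity)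
        _ = (C₀ * L1^(r^2-1) * M) * (U (n:ℕ) - U ((n+1:ℕ))) := by ring
    have hbig : |∑ n ∈ Icc 1 (N-1), E n * (P (U ((n+1:ℕ))) - P (U n))|
        ≤ (C₀ * L1^(r^2-1) * M) * (U 1 - U N) := by
      calc |∑ n ∈ Icc 1 (N-1), E n * (P (U ((n+1:ℕ))) - P (U n))|
          ≤ ∑ n ∈ Icc 1 (N-1), |E n * (P (U ((n+1:ℕ))) - P (U n))| :=
            Finset.abs_sum_le_sum_abs _ _
        _ ≤ ∑ n ∈ Icc 1 (N-1), (C₀ * L1^(r^2-1) * M) * (U n - U ((n+1:ℕ))) :=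
            Finset.sum_le_sum hterm2
        _ = (C₀ * L1^(r^2-1) * M) * ∑ n ∈ Icc 1 (N-1), (U n - U ((n+1:ℕ))) := by
            rw [Finset.mul_sum]
        _ = (C₀ * L1^(r^2-1) * M) * (U 1 - U N) := by rw [htel]
    have hUN01 := hUmemN N hN1 le_rfl
    have hfirst : |E N * P (U N)| ≤ (C₀ * L1^(r^2-1)) * Mp := by
      rw [abs_mul]
      exact mul_le_mul (hEbound N hN1 le_rfl) (hMp _ hUN01) (abs_nonneg _) (by positivity)
    have hU1N : U 1 - U N ≤ 1 := by
      rw [hU1]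
      have := hUN01.1
      linarith
    have hU1N0 : 0 ≤ U 1 - U N := by
      rw [hU1]; have := hUN01.2; linarith
    calc |E N * P (U N) - ∑ n ∈ Icc 1 (N-1), E n * (P (U ((n+1:ℕ))) - P (U n))|
        ≤ |E N * P (U N)| + |∑ n ∈ Icc 1 (N-1), E n * (P (U ((n+1:ℕ))) - P (U n))| :=
          habs_sub _ _
      _ ≤ (C₀ * L1^(r^2-1)) * Mp + (C₀ * L1^(r^2-1) * M) * (U 1 - U N) := by
          apply add_le_add hfirst hbig
      _ ≤ (C₀ * L1^(r^2-1)) * Mp + (C₀ * L1^(r^2-1) * M) * 1 := by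
          apply add_le_add_right
          apply mul_le_mul_of_nonneg_left hU1N (by positivity)
      _ = (C₀ * Mp + C₀ * M) * L1 ^ (r^2-1) := by ring
  -- continuity facts
  have hIci : ∀ a b : ℝ, 1 ≤ a → 1 ≤ b → Set.uIcc a b ⊆ Set.Ici (1:ℝ) := by
    intro a b ha hb x hx
    simp only [Set.mem_uIcc] at hx
    simp only [Set.mem_Ici]
    rcases hx with ⟨h1, h2⟩ | ⟨h1, h2⟩ <;> linarith
  have hne0 : Set.Ici (1:ℝ) ⊆ {(0:ℝ)}ᶜ := by
    intro x hx
    simp only [Set.mem_Ici] at hx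
    simp only [Set.mem_compl_iff, Set.mem_singleton_iff]
    intro h; rw [h] at hx; linarith
  have hlogcont : ContinuousOn Real.log (Set.Ici (1:ℝ)) := Real.continuousOn_log.mono hne0
  have hUcontOn : ContinuousOn U (Set.Ici (1:ℝ)) := by
    rw [hUdef]
    exact continuousOn_const.sub (hlogcont.div_const L)
  set F' : ℝ → ℝ := fun x => ((r^2:ℕ):ℝ) * Real.log x ^ (r^2-1) * x⁻¹ with hF'def
  set g : ℝ → ℝ := fun x => ((r^2:ℕ):ℝ) * Real.log x ^ (r^2-1) * x⁻¹ * P (U x) with hgdef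
  have hF'cont : ContinuousOn F' (Set.Ici (1:ℝ)) := by
    rw [hF'def]
    exact ((continuousOn_const.mul (hlogcont.pow _)).mul (continuousOn_inv₀.mono hne0))
  have hgcont : ContinuousOn g (Set.Ici (1:ℝ)) := by
    rw [hgdef]
    exact (((continuousOn_const.mul (hlogcont.pow _)).mul
      (continuousOn_inv₀.mono hne0)).mul (hPc.comp_continuousOn hUcontOn))
  have hgInt : ∀ a b : ℝ, 1 ≤ a → 1 ≤ b → IntervalIntegrable g MeasureTheory.volume a b :=
    fun a b ha hb => (hgcont.mono (hIci a b ha hb)).intervalIntegrable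
  have hF'Int : ∀ a b : ℝ, 1 ≤ a → 1 ≤ b → IntervalIntegrable F' MeasureTheory.volume a b :=
    fun a b ha hb => (hF'cont.mono (hIci a b ha hb)).intervalIntegrable
  have hFderiv : ∀ x : ℝ, x ≠ 0 → HasDerivAt (fun y => Real.log y ^ (r^2)) (F' x) x := by
    intro x hx
    rw [hF'def]
    exact (Real.hasDerivAt_log hx).pow _
  have hFTC : ∀ n : ℕ, 2 ≤ n → φ n - φ (n-1) = ∫ x in ((n:ℝ)-1)..(n:ℝ), F' x := by
    intro n h2
    have hc1 : ((n-1:ℕ):ℝ) = (n:ℝ)-1 := by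
      rw [Nat.cast_sub (by omega)]; norm_num
    have hle : ((n:ℝ)-1) ≤ (n:ℝ) := by linarith
    have hn1R : (1:ℝ) ≤ (n:ℝ)-1 := by
      have : (2:ℝ) ≤ (n:ℝ) := by exact_mod_cast h2
      linarith
    rw [intervalIntegral.integral_eq_sub_of_hasDerivAt
      (f := fun y => Real.log y ^ (r^2)) (fun x hx => by
        apply hFderiv
        have := hIci _ _ (by linarith : (1:ℝ) ≤ (n:ℝ)-1) (by linarith : (1:ℝ) ≤ (n:ℝ))
        have hx1 := hne0 (this hx)
        simpa using hx1)
      (hF'Int _ _ (by linarith) (by linarith))]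
    rw [hφdef]; simp only
    rw [hc1]
  have hlogN : Real.log (N:ℝ) ≤ L := by
    rw [hLdef]; exact Real.log_le_log hN0 hNK
  have hcomp : ∀ n : ℕ, 2 ≤ n → n ≤ N →
      |(φ n - φ (n-1)) * P (U n) - ∫ x in ((n:ℝ)-1)..(n:ℝ), g x|
        ≤ (M * ((r^2:ℕ):ℝ) * L1^(r^2-1)) * (((n:ℝ)-1)^2)⁻¹ := by
    intro n h2 hnN
    have hn2R : (2:ℝ) ≤ (n:ℝ) := by exact_mod_cast h2
    have hn1R : (1:ℝ) ≤ (n:ℝ)-1 := by linarith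
    have hnn1 : (0:ℝ) < (n:ℝ)-1 := by linarith
    have hnK : (n:ℝ) ≤ K := le_trans (by exact_mod_cast hnN) hNK
    set δ : ℝ := Real.log (n:ℝ) - Real.log ((n:ℝ)-1) with hδdef
    have hδ0 : 0 ≤ δ := by
      rw [hδdef]
      have := Real.log_le_log hnn1 (by linarith : (n:ℝ)-1 ≤ (n:ℝ))
      linarith
    have hδle : δ ≤ (((n:ℝ)-1))⁻¹ := by
      have hpos : (0:ℝ) < (n:ℝ)/((n:ℝ)-1) := by positivity
      have h1 := Real.log_le_sub_one_of_pos hpos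
      rw [Real.log_div (by linarith) (by linarith)] at h1
      have h2' : (n:ℝ)/((n:ℝ)-1) - 1 = (((n:ℝ)-1))⁻¹ := by field_simp; ring
      rw [hδdef]; linarith [h1, h2'.le, h2'.ge]
    have hmemUn := hUmemN n (by omega) hnN
    have hptbound : ∀ x ∈ Set.Icc ((n:ℝ)-1) (n:ℝ), |F' x * P (U n) - g x| ≤ F' x * (M * (δ / L)) := by
      intro x hx
      obtain ⟨hxa, hxb⟩ := hx
      have hx1 : (1:ℝ) ≤ x := by linarith
      have hx0 : (0:ℝ) < x := by linarith
      have hmemUx := hUmem x hx1 (by linarith)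
      have heq : F' x * P (U (n:ℕ)) - g x = F' x * (P (U (n:ℕ)) - P (U x)) := by
        rw [hgdef, hF'def]; ring
      rw [heq, abs_mul]
      have hF'0 : 0 ≤ F' x := by
        rw [hF'def]
        have : (0:ℝ) ≤ Real.log x := Real.log_nonneg hx1
        positivity
      rw [abs_of_nonneg hF'0]
      apply mul_le_mul_of_nonneg_left _ hF'0
      have hlip := hLip _ hmemUn _ hmemUx
      have hUx : U (n:ℕ) - U x = -((Real.log (n:ℝ) - Real.log x)/L) := by
        rw [hUdef]; simp only; field_simp; ring
      have hlogx : Real.log x ≤ Real.log (n:ℝ) := Real.log_le_log hx0 hxb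
      have hlogx2 : Real.log ((n:ℝ)-1) ≤ Real.log x := Real.log_le_log hnn1 hxa
      have habs : |U (n:ℕ) - U x| = (Real.log (n:ℝ) - Real.log x)/L := by
        rw [hUx, abs_neg, abs_of_nonneg (div_nonneg (by linarith) hL0.le)]
      rw [habs] at hlip
      apply le_trans hlip
      apply mul_le_mul_of_nonneg_left _ hM0
      rw [hδdef]
      gcongr
    -- integral manipulation
    have hInt1 : IntervalIntegrable (fun x => F' x * P (U (n:ℕ))) MeasureTheory.volume ((n:ℝ)-1) (n:ℝ) :=
      (hF'Int _ _ (by linarith) (by linarith)).mul_const _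
    have hInt2 : IntervalIntegrable g MeasureTheory.volume ((n:ℝ)-1) (n:ℝ) :=
      hgInt _ _ (by linarith) (by linarith)
    have he1 : (φ n - φ (n-1)) * P (U (n:ℕ)) = ∫ x in ((n:ℝ)-1)..(n:ℝ), F' x * P (U (n:ℕ)) := by
      rw [hFTC n h2, intervalIntegral.integral_mul_const]
    rw [he1, ← intervalIntegral.integral_sub hInt1 hInt2]
    have hle : ((n:ℝ)-1) ≤ (n:ℝ) := by linarith
    have hc1 : ((n-1:ℕ):ℝ) = (n:ℝ)-1 := by
      rw [Nat.cast_sub (by omega)]; norm_num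
    have hlogn0' : 0 ≤ Real.log ((n:ℝ)-1) := Real.log_nonneg hn1R
    have hlognle : Real.log (n:ℝ) ≤ L := by
      apply le_trans _ hlogN
      exact Real.log_le_log (by linarith) (by exact_mod_cast hnN)
    have hφΔ : φ n - φ (n-1) ≤ ((r^2:ℕ):ℝ) * L^(r^2-1) * δ := by
      have hp := pow_sub_pow_le_aux (r^2) hlogn0'
        (Real.log_le_log hnn1 (by linarith : (n:ℝ)-1 ≤ (n:ℝ)))
      rw [hφdef]; simp only; rw [hc1]
      have hpow : Real.log (n:ℝ) ^ (r^2-1) ≤ L ^ (r^2-1) :=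
        pow_le_pow_left₀ (Real.log_nonneg (by linarith)) hlognle _
      calc Real.log (n:ℝ) ^ (r^2) - Real.log ((n:ℝ)-1) ^ (r^2)
          ≤ ((r^2:ℕ):ℝ) * Real.log (n:ℝ) ^ (r^2-1) * δ := hp
        _ ≤ ((r^2:ℕ):ℝ) * L^(r^2-1) * δ := by
            apply mul_le_mul_of_nonneg_right (mul_le_mul_of_nonneg_left hpow (by positivity)) hδ0
    have hLmL : L^(r^2-1)/L ≤ L1^(r^2-1) :=
      le_trans (div_le_self (by positivity) hL1') (pow_le_pow_left₀ hL0.le hLleL1 _)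
    have hδsq : δ^2 ≤ (((n:ℝ)-1)^2)⁻¹ := by
      rw [← inv_pow]
      exact pow_le_pow_left₀ hδ0 hδle 2
    calc |∫ x in ((n:ℝ)-1)..(n:ℝ), (F' x * P (U (n:ℕ)) - g x)|
        ≤ ∫ x in ((n:ℝ)-1)..(n:ℝ), |F' x * P (U (n:ℕ)) - g x| :=
          intervalIntegral.abs_integral_le_integral_abs hle
      _ ≤ ∫ x in ((n:ℝ)-1)..(n:ℝ), F' x * (M * (δ / L)) := by
          apply intervalIntegral.integral_mono_on hle ((hInt1.sub hInt2).abs)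
            ((hF'Int _ _ (by linarith) (by linarith)).mul_const _) hptbound
      _ = (φ n - φ (n-1)) * (M * (δ / L)) := by
          rw [intervalIntegral.integral_mul_const, ← hFTC n h2]
      _ ≤ (((r^2:ℕ):ℝ) * L^(r^2-1) * δ) * (M * (δ / L)) :=
          mul_le_mul_of_nonneg_right hφΔ (by positivity)
      _ = (M * ((r^2:ℕ):ℝ)) * (L^(r^2-1)/L) * δ^2 := by ring
      _ ≤ (M * ((r^2:ℕ):ℝ)) * L1^(r^2-1) * (((n:ℝ)-1)^2)⁻¹ := by
          apply mul_le_mul (mul_le_mul_of_nonneg_left hLmL (by positivity)) hδsq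
            (sq_nonneg δ) (by positivity)
      _ = (M * ((r^2:ℕ):ℝ) * L1^(r^2-1)) * (((n:ℝ)-1)^2)⁻¹ := by ring
  have hsplit1 : ∑ n ∈ Icc 1 N, (φ n - φ (n-1)) * P (U n)
      = ∑ n ∈ Icc 2 N, (φ n - φ (n-1)) * P (U n) := by
    have hins : Icc 1 N = insert 1 (Icc 2 N) := by
      ext x; simp only [Finset.mem_Icc, Finset.mem_insert]; omega
    rw [hins, Finset.sum_insert (by simp)]
    have : φ 1 - φ (1-1) = 0 := by
      norm_num [hφ1, hφ0]
    rw [this]; ring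
  have hadj : ∑ n ∈ Icc 2 N, ∫ x in ((n:ℝ)-1)..(n:ℝ), g x = ∫ x in (1:ℝ)..(N:ℝ), g x := by
    rw [← Finset.Ico_add_one_right_eq_Icc, Finset.sum_Ico_eq_sum_range]
    have he : N + 1 - 2 = N - 1 := by omega
    rw [he]
    have key := intervalIntegral.sum_integral_adjacent_intervals
      (a := fun i : ℕ => ((i:ℝ)+1)) (n := N-1) (f := g)
      (fun k hk => hgInt _ _ (by push_cast; linarith) (by push_cast; linarith))
    have h0 : ((0:ℕ):ℝ)+1 = (1:ℝ) := by norm_num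
    have hNm : ((N-1:ℕ):ℝ)+1 = (N:ℝ) := by
      rw [Nat.cast_sub hN1]; norm_num
    beta_reduce at key
    rw [h0, hNm] at key
    rw [← key]
    apply Finset.sum_congr rfl
    intro i hi
    have e1 : ((2+i:ℕ):ℝ) - 1 = ((i:ℕ):ℝ)+1 := by push_cast; ring
    have e2 : ((2+i:ℕ):ℝ) = ((i+1:ℕ):ℝ)+1 := by push_cast; ring
    rw [e1, e2]
  have hY : |(∑ n ∈ Icc 1 N, (φ n - φ (n-1)) * P (U n)) - ∫ x in (1:ℝ)..(N:ℝ), g x|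
      ≤ 2 * (M * ((r^2:ℕ):ℝ) * L1^(r^2-1)) := by
    rw [hsplit1, ← hadj, ← Finset.sum_sub_distrib]
    calc |∑ n ∈ Icc 2 N, ((φ n - φ (n-1)) * P (U n) - ∫ x in ((n:ℝ)-1)..(n:ℝ), g x)|
        ≤ ∑ n ∈ Icc 2 N, |(φ n - φ (n-1)) * P (U n) - ∫ x in ((n:ℝ)-1)..(n:ℝ), g x| :=
          Finset.abs_sum_le_sum_abs _ _
      _ ≤ ∑ n ∈ Icc 2 N, (M * ((r^2:ℕ):ℝ) * L1^(r^2-1)) * (((n:ℝ)-1)^2)⁻¹ := by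
          apply Finset.sum_le_sum
          intro n hn
          obtain ⟨ha, hb⟩ := Finset.mem_Icc.1 hn
          exact hcomp n ha hb
      _ = (M * ((r^2:ℕ):ℝ) * L1^(r^2-1)) * ∑ n ∈ Icc 2 N, (((n:ℝ)-1)^2)⁻¹ := by
          rw [Finset.mul_sum]
      _ ≤ (M * ((r^2:ℕ):ℝ) * L1^(r^2-1)) * 2 := by
          apply mul_le_mul_of_nonneg_left (sum_inv_sq_aux N) (by positivity)
      _ = 2 * (M * ((r^2:ℕ):ℝ) * L1^(r^2-1)) := by ring
  -- change of variables
  have hN1R : (1:ℝ) ≤ (N:ℝ) := by exact_mod_cast hN1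
  have hUderiv : ∀ x ∈ Set.uIcc (1:ℝ) (N:ℝ), HasDerivAt U (-(x⁻¹/L)) x := by
    intro x hx
    have hx1 : (1:ℝ) ≤ x := hIci 1 (N:ℝ) le_rfl hN1R hx
    rw [hUdef]
    exact ((Real.hasDerivAt_log (by linarith)).div_const L).const_sub 1
  set hfun : ℝ → ℝ := fun v => -(L * (((r^2:ℕ):ℝ) * (L*(1-v))^(r^2-1) * P v)) with hhdef
  have hhcont : Continuous hfun := by
    rw [hhdef]
    exact (continuous_const.mul ((continuous_const.mul
      ((continuous_const.mul (continuous_const.sub continuous_id)).pow _)).mul hPc)).neg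
  have hUF'cont : ContinuousOn (fun x : ℝ => -(x⁻¹/L)) (Set.uIcc 1 (N:ℝ)) :=
    (((continuousOn_inv₀.mono hne0).mono (hIci 1 (N:ℝ) le_rfl hN1R)).div_const L).neg
  have hsubst : ∫ x in (1:ℝ)..(N:ℝ), g x = ∫ v in (U 1)..(U (N:ℝ)), hfun v := by
    rw [← intervalIntegral.integral_comp_smul_deriv hUderiv hUF'cont hhcont]
    apply intervalIntegral.integral_congr
    intro x hx
    have hx1 : (1:ℝ) ≤ x := hIci 1 (N:ℝ) le_rfl hN1R hx
    simp only [Function.comp, smul_eq_mul]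
    rw [hgdef, hhdef, hUdef]
    simp only
    have he2 : L * (1 - (1 - Real.log x / L)) = Real.log x := by field_simp; ring
    rw [he2]
    field_simp
  have hPicont : Continuous (fun v : ℝ => (1-v)^(r^2-1) * P v) :=
    (((continuous_const.sub continuous_id).pow _).mul hPc)
  have hIone : (∫ v in (0:ℝ)..(U (N:ℝ)), (1-v)^(r^2-1) * P v)
      + ∫ v in (U (N:ℝ))..(1:ℝ), (1-v)^(r^2-1) * P v
      = ∫ v in (0:ℝ)..(1:ℝ), (1-v)^(r^2-1) * P v :=
    intervalIntegral.integral_add_adjacent_intervals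
      (hPicont.intervalIntegrable _ _) (hPicont.intervalIntegrable _ _)
  have hI₀P : I₀ = ∫ v in (0:ℝ)..(1:ℝ), (1-v)^(r^2-1) * P v := by
    rw [hI₀def]
  have hcomp2 : ∫ v in (U (N:ℝ))..(1:ℝ), (1-v)^(r^2-1) * P v
      = I₀ - ∫ v in (0:ℝ)..(U (N:ℝ)), (1-v)^(r^2-1) * P v := by
    rw [hI₀P]; linarith [hIone]
  have hLq : L * L^(r^2-1) = L^(r^2) := by
    rw [← pow_succ']
    congr 1
    omega
  have hsub2 : ∫ x in (1:ℝ)..(N:ℝ), g x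
      = ((r^2:ℕ):ℝ) * L^(r^2) * (I₀ - ∫ v in (0:ℝ)..(U (N:ℝ)), (1-v)^(r^2-1) * P v) := by
    rw [hsubst, hU1, intervalIntegral.integral_symm]
    have hcc : ∫ v in (U (N:ℝ))..(1:ℝ), hfun v
        = (-(L * ((r^2:ℕ):ℝ) * L^(r^2-1))) * ∫ v in (U (N:ℝ))..(1:ℝ), ((1-v)^(r^2-1) * P v) := by
      rw [← intervalIntegral.integral_const_mul]
      apply intervalIntegral.integral_congr
      intro x hx
      rw [hhdef]; simp only
      rw [mul_pow]; ring
    rw [hcc, hcomp2, ← hLq]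
    ring
  -- tail bound
  have hUNmem := hUmemN N hN1 le_rfl
  have htail : |∫ v in (0:ℝ)..(U (N:ℝ)), (1-v)^(r^2-1) * P v| ≤ Mp * (U (N:ℝ)) := by
    have key := intervalIntegral.norm_integral_le_of_norm_le_const (C := Mp) (a := (0:ℝ))
      (b := U (N:ℝ)) (f := fun v => (1-v)^(r^2-1) * P v) ?_
    · rw [Real.norm_eq_abs] at key
      apply le_trans key
      rw [sub_zero, abs_of_nonneg hUNmem.1]
    · intro x hx
      rw [Set.uIoc_of_le hUNmem.1] at hx
      obtain ⟨hx0, hx1⟩ := hx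
      have hx01 : x ∈ Set.Icc (0:ℝ) 1 := ⟨hx0.le, le_trans hx1 hUNmem.2⟩
      rw [Real.norm_eq_abs, abs_mul]
      have h1x : 0 ≤ 1 - x := by linarith [hx01.2]
      have h2x : (1-x)^(r^2-1) ≤ 1 := pow_le_one₀ h1x (by linarith [hx0])
      have h3x : |(1-x)^(r^2-1)| ≤ 1 := by rw [abs_of_nonneg (by positivity)]; exact h2x
      calc |(1-x)^(r^2-1)| * |P x| ≤ 1 * Mp :=
            mul_le_mul h3x (hMp _ hx01) (abs_nonneg _) zero_le_one
        _ = Mp := one_mul Mp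
  have hLUN : L^(r^2) * U (N:ℝ) ≤ L1^(r^2-1) := by
    have h1 : U (N:ℝ) = (L - Real.log (N:ℝ))/L := by
      rw [hUdef]; field_simp
    have hlg : L - Real.log (N:ℝ) ≤ K/(N:ℝ) - 1 := by
      have h2 := Real.log_le_sub_one_of_pos (show (0:ℝ) < K/(N:ℝ) by positivity)
      rw [Real.log_div hK0.ne' (ne_of_gt hN0)] at h2
      rw [hLdef]; linarith
    have h3 : K/(N:ℝ) - 1 ≤ 1 := by
      rw [sub_le_iff_le_add, div_le_iff₀ hN0]
      linarith [hKN, hN1R]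
    have h4 : L - Real.log (N:ℝ) ≤ 1 := by linarith
    have h5 : 0 ≤ L - Real.log (N:ℝ) := by linarith [hlogN]
    have h6 : L^(r^2) * U (N:ℝ) = L^(r^2-1) * (L - Real.log (N:ℝ)) := by
      rw [h1, ← hLq]
      field_simp
    rw [h6]
    calc L^(r^2-1) * (L - Real.log (N:ℝ)) ≤ L^(r^2-1) * 1 :=
          mul_le_mul_of_nonneg_left h4 (by positivity)
      _ = L^(r^2-1) := mul_one _
      _ ≤ L1^(r^2-1) := pow_le_pow_left₀ hL0.le hLleL1 _
  have hqnn : (0:ℝ) ≤ ((r^2:ℕ):ℝ) := Nat.cast_nonneg _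
  have hTail : |((r^2:ℕ):ℝ) * L^(r^2) * ∫ v in (0:ℝ)..(U (N:ℝ)), (1-v)^(r^2-1) * P v|
      ≤ ((r^2:ℕ):ℝ) * Mp * L1^(r^2-1) := by
    rw [abs_mul, abs_mul, Nat.abs_cast, abs_of_nonneg (pow_nonneg hL0.le _)]
    calc ((r^2:ℕ):ℝ) * L^(r^2) * |∫ v in (0:ℝ)..(U (N:ℝ)), (1-v)^(r^2-1) * P v|
        ≤ ((r^2:ℕ):ℝ) * L^(r^2) * (Mp * (U (N:ℝ))) := by
          apply mul_le_mul_of_nonneg_left htail (by positivity)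
      _ = ((r^2:ℕ):ℝ) * Mp * (L^(r^2) * U (N:ℝ)) := by ring
      _ ≤ ((r^2:ℕ):ℝ) * Mp * L1^(r^2-1) := by
          apply mul_le_mul_of_nonneg_left hLUN (by positivity)
  have hLdiffB : |L^(r^2) - L1^(r^2)| ≤ ((r^2:ℕ):ℝ) * L1^(r^2-1) * (2*Real.log L1) := by
    have h1 : L^(r^2) ≤ L1^(r^2) := pow_le_pow_left₀ hL0.le hLleL1 _
    rw [abs_of_nonpos (by linarith), neg_sub]
    have h2 := pow_sub_pow_le_aux (r^2) hL0.le hLleL1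
    have h3 : L1 - L = 2*Real.log L1 := by rw [hLeq]; ring
    rw [h3] at h2
    exact h2
  -- final assembly
  have hq2 : ((r^2:ℕ):ℝ) = (r:ℝ)^2 := by push_cast; ring
  rw [hsum1, hdecomp, ← hq2]
  have hp1 : L1^(r^2-1) ≤ L1 ^ ((((r^2:ℕ):ℝ) - 1) + ε) := by
    rw [← Real.rpow_natCast L1 (r^2-1)]
    apply Real.rpow_le_rpow_of_exponent_le hL1_1
    rw [Nat.cast_sub hq1]
    push_cast
    linarith
  have hlogL1e : Real.log L1 ≤ L1 ^ (ε:ℝ) / ε := by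
    have h1 : Real.log (L1 ^ (ε:ℝ)) = ε * Real.log L1 := Real.log_rpow hL1_0 ε
    have h2 : Real.log (L1 ^ (ε:ℝ)) ≤ L1 ^ (ε:ℝ) - 1 :=
      Real.log_le_sub_one_of_pos (Real.rpow_pos_of_pos hL1_0 ε)
    exact logdiv_aux hε h1 h2
  have hp2 : L1^(r^2-1) * Real.log L1 ≤ L1 ^ ((((r^2:ℕ):ℝ) - 1) + ε) / ε := by
    have h4 : L1^(r^2-1) * (L1 ^ (ε:ℝ) / ε) = L1 ^ ((((r^2:ℕ):ℝ) - 1) + ε) / ε := by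
      rw [← Real.rpow_natCast L1 (r^2-1), div_eq_mul_inv, div_eq_mul_inv, ← mul_assoc,
        ← Real.rpow_add hL1_0]
      congr 2
      rw [Nat.cast_sub hq1]
      push_cast
      ring
    calc L1^(r^2-1) * Real.log L1 ≤ L1^(r^2-1) * (L1 ^ (ε:ℝ) / ε) :=
          mul_le_mul_of_nonneg_left hlogL1e hL1m0
      _ = L1 ^ ((((r^2:ℕ):ℝ) - 1) + ε) / ε := h4
  set X1 := E N * P (U (N:ℕ)) - ∑ n ∈ Icc 1 (N-1), E n * (P (U ((n+1:ℕ))) - P (U n)) with hX1d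
  set Y := ∑ n ∈ Icc 1 N, (φ n - φ (n-1)) * P (U n) with hYd
  set G := ∫ x in (1:ℝ)..(N:ℝ), g x with hGd
  set Tl := ∫ v in (0:ℝ)..(U (N:ℝ)), (1-v)^(r^2-1) * P v with hTld
  have hkey : X1 + A * Y - A * ((r^2:ℕ):ℝ) * L1^(r^2) * I₀
      = X1 + A * (Y - G) + (-(A * (((r^2:ℕ):ℝ) * L^(r^2) * Tl)))
        + A * ((r^2:ℕ):ℝ) * ((L^(r^2) - L1^(r^2)) * I₀) := by
    rw [hsub2]
    ring
  rw [hkey]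
  have hb1 := hX1
  have hb2 : |A * (Y - G)| ≤ |A| * (2 * (M * ((r^2:ℕ):ℝ) * L1^(r^2-1))) := by
    rw [abs_mul]
    exact mul_le_mul_of_nonneg_left hY (abs_nonneg A)
  have hb3 : |-(A * (((r^2:ℕ):ℝ) * L^(r^2) * Tl))| ≤ |A| * (((r^2:ℕ):ℝ) * Mp * L1^(r^2-1)) := by
    rw [abs_neg, abs_mul]
    apply mul_le_mul_of_nonneg_left _ (abs_nonneg A)
    have : ((r^2:ℕ):ℝ) * L^(r^2) * Tl = ((r^2:ℕ):ℝ) * L^(r^2) * ∫ v in (0:ℝ)..(U (N:ℝ)), (1-v)^(r^2-1) * P v := by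
      rw [hTld]
    rw [this]
    exact hTail
  have hb4 : |A * ((r^2:ℕ):ℝ) * ((L^(r^2) - L1^(r^2)) * I₀)|
      ≤ |A| * ((r^2:ℕ):ℝ) * ((((r^2:ℕ):ℝ) * L1^(r^2-1) * (2*Real.log L1)) * |I₀|) := by
    rw [abs_mul, abs_mul, Nat.abs_cast, abs_mul]
    apply mul_le_mul_of_nonneg_left _ (by positivity)
    exact mul_le_mul_of_nonneg_right hLdiffB (abs_nonneg I₀)
  have habs4 : |X1 + A * (Y - G) + (-(A * (((r^2:ℕ):ℝ) * L^(r^2) * Tl)))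
      + A * ((r^2:ℕ):ℝ) * ((L^(r^2) - L1^(r^2)) * I₀)|
      ≤ |X1| + |A * (Y - G)| + |-(A * (((r^2:ℕ):ℝ) * L^(r^2) * Tl))|
        + |A * ((r^2:ℕ):ℝ) * ((L^(r^2) - L1^(r^2)) * I₀)| := by
    calc |X1 + A * (Y - G) + (-(A * (((r^2:ℕ):ℝ) * L^(r^2) * Tl)))
        + A * ((r^2:ℕ):ℝ) * ((L^(r^2) - L1^(r^2)) * I₀)|
        ≤ |X1 + A * (Y - G) + (-(A * (((r^2:ℕ):ℝ) * L^(r^2) * Tl)))|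
          + |A * ((r^2:ℕ):ℝ) * ((L^(r^2) - L1^(r^2)) * I₀)| := abs_add_le _ _
      _ ≤ (|X1 + A * (Y - G)| + |-(A * (((r^2:ℕ):ℝ) * L^(r^2) * Tl))|)
          + |A * ((r^2:ℕ):ℝ) * ((L^(r^2) - L1^(r^2)) * I₀)| :=
          add_le_add_left (abs_add_le _ _) _
      _ ≤ ((|X1| + |A * (Y - G)|) + |-(A * (((r^2:ℕ):ℝ) * L^(r^2) * Tl))|)
          + |A * ((r^2:ℕ):ℝ) * ((L^(r^2) - L1^(r^2)) * I₀)| :=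
          add_le_add_left (add_le_add_left (abs_add_le _ _) _) _
  have hAnn : (0:ℝ) ≤ |A| := abs_nonneg A
  have hc1nn : (0:ℝ) ≤ C₀ * Mp + C₀ * M := by
    have := mul_nonneg hC₀0 hMp0
    have := mul_nonneg hC₀0 hM0
    linarith

  have hbr1nn : (0:ℝ) ≤ (C₀ * Mp + C₀ * M) + |A| * (2 * M * ((r^2:ℕ):ℝ)) + |A| * (((r^2:ℕ):ℝ) * Mp) := by
    have h1 : (0:ℝ) ≤ |A| * (2 * M * ((r^2:ℕ):ℝ)) :=
      mul_nonneg hAnn (mul_nonneg (mul_nonneg zero_le_two hM0) hqnn)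
    have h2 : (0:ℝ) ≤ |A| * (((r^2:ℕ):ℝ) * Mp) := mul_nonneg hAnn (mul_nonneg hqnn hMp0)
    linarith
  have hbr2nn : (0:ℝ) ≤ |A| * ((r^2:ℕ):ℝ) * (((r^2:ℕ):ℝ) * 2 * |I₀|) :=
    mul_nonneg (mul_nonneg hAnn hqnn)
      (mul_nonneg (mul_nonneg hqnn zero_le_two) (abs_nonneg I₀))
  apply le_trans habs4
  calc |X1| + |A * (Y - G)| + |-(A * (((r^2:ℕ):ℝ) * L^(r^2) * Tl))|
      + |A * ((r^2:ℕ):ℝ) * ((L^(r^2) - L1^(r^2)) * I₀)|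
      ≤ (C₀ * Mp + C₀ * M) * L1^(r^2-1) + |A| * (2 * (M * ((r^2:ℕ):ℝ) * L1^(r^2-1)))
        + |A| * (((r^2:ℕ):ℝ) * Mp * L1^(r^2-1))
        + |A| * ((r^2:ℕ):ℝ) * ((((r^2:ℕ):ℝ) * L1^(r^2-1) * (2*Real.log L1)) * |I₀|) :=
        add_le_add (add_le_add (add_le_add hb1 hb2) hb3) hb4
    _ = ((C₀ * Mp + C₀ * M) + |A| * (2 * M * ((r^2:ℕ):ℝ)) + |A| * (((r^2:ℕ):ℝ) * Mp)) * L1^(r^2-1)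
        + (|A| * ((r^2:ℕ):ℝ) * (((r^2:ℕ):ℝ) * 2 * |I₀|)) * (L1^(r^2-1) * Real.log L1) := by
        ring
    _ ≤ ((C₀ * Mp + C₀ * M) + |A| * (2 * M * ((r^2:ℕ):ℝ)) + |A| * (((r^2:ℕ):ℝ) * Mp))
          * (L1 ^ ((((r^2:ℕ):ℝ) - 1) + ε))
        + (|A| * ((r^2:ℕ):ℝ) * (((r^2:ℕ):ℝ) * 2 * |I₀|)) * (L1 ^ ((((r^2:ℕ):ℝ) - 1) + ε) / ε) :=
        add_le_add (mul_le_mul_of_nonneg_left hp1 hbr1nn)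
          (mul_le_mul_of_nonneg_left hp2 hbr2nn)
    _ = ((C₀ * Mp + C₀ * M) + |A| * (2 * M * ((r^2:ℕ):ℝ)) + |A| * (((r^2:ℕ):ℝ) * Mp)
        + |A| * ((r^2:ℕ):ℝ) * (((r^2:ℕ):ℝ) * 2 * |I₀|) / ε) * L1 ^ ((((r^2:ℕ):ℝ) - 1) + ε) := by
        ring
end
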